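/- arXiv:0902.2514 — 10 statements merged into one kernel-verified Lean document; each statement's English description precedes it below -/
import Mathlib

section
/- For every real number s with 0 < s < 1 and every real number x > 0, the double inequality (x/(x+s))^{1-s} ≤ Γ(x+s)/(x^s · Γ(x)) ≤ 1 holds, where Γ denotes Euler's gamma function. -/
open Real

theorem wendel_double_inequality (s x : ℝ) (hs0 : 0 < s) (hs1 : s < 1) (hx : 0 < x) :
    (x / (x + s)) ^ (1 - s) ≤ Gamma (x + s) / (x ^ s * Gamma x) ∧
      Gamma (x + s) / (x ^ s * Gamma x) ≤ 1 := by
  have hxs : (0:ℝ) < x + s := by linarith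
  have hGx : 0 < Gamma x := Real.Gamma_pos_of_pos hx
  have hGxs : 0 < Gamma (x + s) := Real.Gamma_pos_of_pos hxs
  have h1s : 0 < 1 - s := by linarith
  have hxpow : 0 < x ^ s := rpow_pos_of_pos hx s
  -- Upper bound: Γ(x+s) ≤ x^s * Γ(x)
  have hupper : Gamma (x + s) ≤ x ^ s * Gamma x := by
    have := Real.Gamma_mul_add_mul_le_rpow_Gamma_mul_rpow_Gamma hx
      (by linarith : (0:ℝ) < x + 1) h1s hs0 (by ring)
    have heq : (1 - s) * x + s * (x + 1) = x + s := by ring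
    rw [heq, Real.Gamma_add_one hx.ne'] at this
    calc Gamma (x + s) ≤ Gamma x ^ (1 - s) * (x * Gamma x) ^ s := this
      _ = x ^ s * Gamma x := by
          rw [mul_rpow hx.le hGx.le, ← mul_assoc, mul_comm (Gamma x ^ (1-s)),
            mul_assoc, ← rpow_add hGx]
          norm_num
  -- Lower bound: x * Γ x ≤ (x+s)^(1-s) * Γ(x+s)
  have hlower : x * Gamma x ≤ (x + s) ^ (1 - s) * Gamma (x + s) := by
    have := Real.Gamma_mul_add_mul_le_rpow_Gamma_mul_rpow_Gamma hxs
      (by linarith : (0:ℝ) < x + s + 1) hs0 h1s (by ring)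
    have heq : s * (x + s) + (1 - s) * (x + s + 1) = x + 1 := by ring
    rw [heq, Real.Gamma_add_one hx.ne', Real.Gamma_add_one hxs.ne'] at this
    calc x * Gamma x ≤ Gamma (x + s) ^ s * ((x + s) * Gamma (x + s)) ^ (1 - s) := this
      _ = (x + s) ^ (1 - s) * Gamma (x + s) := by
          rw [mul_rpow hxs.le hGxs.le, ← mul_assoc, mul_comm (Gamma (x+s) ^ s),
            mul_assoc, ← rpow_add hGxs]
          norm_num
  constructor
  · rw [div_rpow hx.le hxs.le, div_le_div_iff₀ (rpow_pos_of_pos hxs _) (by positivity)]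
    have hxsplit : x ^ (1 - s) * (x ^ s * Gamma x) = x * Gamma x := by
      rw [← mul_assoc, ← rpow_add hx]; norm_num
    rw [hxsplit, mul_comm (Gamma (x+s))]
    exact hlower
  · rw [div_le_one (by positivity)]
    exact hupper
end

section
/- For all real numbers a and b, the limit lim_{x→∞} x^{b-a} · Γ(x+a)/Γ(x+b) = 1 holds (the limit taken as the real variable x tends to +∞), where Γ denotes Euler's gamma function. -/
open Real Filter

private lemma ratio_tendsto (c : ℝ) :
    Tendsto (fun x : ℝ => (x + c) / x) atTop (nhds 1) := by
  have h : Tendsto (fun x : ℝ => 1 + c / x) atTop (nhds 1) := by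
    simpa using (tendsto_const_nhds (x := (1:ℝ))).add
      ((tendsto_const_nhds (x := c)).div_atTop tendsto_id)
  apply h.congr'
  filter_upwards [eventually_gt_atTop (0:ℝ)] with x hx
  field_simp

private lemma ratio_tendsto' (c : ℝ) :
    Tendsto (fun x : ℝ => x / (x + c)) atTop (nhds 1) := by
  have := (ratio_tendsto c).inv₀ one_ne_zero
  simpa [inv_div] using this

private lemma gautschi_upper {s x : ℝ} (hs0 : 0 < s) (hs1 : s < 1) (hx : 0 < x) :
    Gamma (x + s) ≤ x ^ s * Gamma x := by
  have hg := Gamma_pos_of_pos hx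
  have h := Gamma_mul_add_mul_le_rpow_Gamma_mul_rpow_Gamma hx
    (by linarith : (0:ℝ) < x + 1) (by linarith : 0 < 1 - s) hs0 (by ring)
  rw [Gamma_add_one hx.ne'] at h
  rw [show (1 - s) * x + s * (x + 1) = x + s by ring] at h
  calc Gamma (x + s) ≤ Gamma x ^ (1 - s) * (x * Gamma x) ^ s := h
    _ = x ^ s * Gamma x := by
        rw [Real.mul_rpow hx.le hg.le,
          show Gamma x ^ (1 - s) * (x ^ s * Gamma x ^ s)
             = x ^ s * (Gamma x ^ (1 - s) * Gamma x ^ s) by ring,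
          ← Real.rpow_add hg, sub_add_cancel, Real.rpow_one]

private lemma gautschi_lower {s x : ℝ} (hs0 : 0 < s) (hs1 : s < 1) (hx : 0 < x) :
    x * Gamma x ≤ (x + s) ^ (1 - s) * Gamma (x + s) := by
  have hxs : (0:ℝ) < x + s := by linarith
  have hg := Gamma_pos_of_pos hxs
  have h := Gamma_mul_add_mul_le_rpow_Gamma_mul_rpow_Gamma hxs
    (by linarith : (0:ℝ) < x + s + 1) hs0 (by linarith : 0 < 1 - s) (by ring)
  rw [Gamma_add_one hxs.ne'] at h
  rw [show s * (x + s) + (1 - s) * (x + s + 1) = x + 1 by ring] at h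
  rw [Gamma_add_one hx.ne'] at h
  calc x * Gamma x ≤ Gamma (x + s) ^ s * ((x + s) * Gamma (x + s)) ^ (1 - s) := h
    _ = (x + s) ^ (1 - s) * Gamma (x + s) := by
        rw [Real.mul_rpow hxs.le hg.le,
          show Gamma (x+s) ^ s * ((x+s) ^ (1-s) * Gamma (x+s) ^ (1-s))
             = (x+s) ^ (1-s) * (Gamma (x+s) ^ s * Gamma (x+s) ^ (1-s)) by ring,
          ← Real.rpow_add hg, add_sub_cancel, Real.rpow_one]

private lemma aux1 {s : ℝ} (hs0 : 0 < s) (hs1 : s < 1) :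
    Tendsto (fun x : ℝ => x ^ (-s) * Gamma (x + s) / Gamma x) atTop (nhds 1) := by
  have hlow : Tendsto (fun x : ℝ => (x / (x + s)) ^ (1 - s)) atTop (nhds 1) := by
    have := (ratio_tendsto' s).rpow_const (p := 1 - s) (Or.inl one_ne_zero)
    simpa using this
  refine tendsto_of_tendsto_of_tendsto_of_le_of_le' hlow tendsto_const_nhds ?_ ?_
  · filter_upwards [eventually_gt_atTop (0:ℝ)] with x hx
    have hxs : (0:ℝ) < x + s := by linarith
    have hg := Gamma_pos_of_pos hx
    have hgs := Gamma_pos_of_pos hxs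
    have key := gautschi_lower hs0 hs1 hx
    rw [Real.div_rpow hx.le hxs.le, div_le_div_iff₀ (Real.rpow_pos_of_pos hxs _) hg]
    calc x ^ (1 - s) * Gamma x = x ^ (-s) * (x * Gamma x) := by
            rw [show (1 : ℝ) - s = -s + 1 by ring, Real.rpow_add hx, Real.rpow_one]; ring
      _ ≤ x ^ (-s) * ((x + s) ^ (1 - s) * Gamma (x + s)) := by
            exact mul_le_mul_of_nonneg_left key (Real.rpow_nonneg hx.le _)
      _ = x ^ (-s) * Gamma (x + s) * (x + s) ^ (1 - s) := by ring
  · filter_upwards [eventually_gt_atTop (0:ℝ)] with x hx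
    have hg := Gamma_pos_of_pos hx
    rw [div_le_one hg]
    calc x ^ (-s) * Gamma (x + s) ≤ x ^ (-s) * (x ^ s * Gamma x) :=
          mul_le_mul_of_nonneg_left (gautschi_upper hs0 hs1 hx) (Real.rpow_nonneg hx.le _)
      _ = Gamma x := by
          rw [← mul_assoc, ← Real.rpow_add hx, neg_add_cancel, Real.rpow_zero, one_mul]

private lemma step_up {c : ℝ}
    (h : Tendsto (fun x : ℝ => x ^ (-c) * Gamma (x + c) / Gamma x) atTop (nhds 1)) :
    Tendsto (fun x : ℝ => x ^ (-(c+1)) * Gamma (x + (c+1)) / Gamma x) atTop (nhds 1) := by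
  have h2 := h.mul (ratio_tendsto c)
  rw [mul_one] at h2
  apply h2.congr'
  filter_upwards [eventually_gt_atTop (0:ℝ), eventually_gt_atTop (-c)] with x hx hxc
  have hxc' : x + c ≠ 0 := (by linarith : (0:ℝ) < x + c).ne'
  rw [show x + (c+1) = (x + c) + 1 by ring, Gamma_add_one hxc',
    show -(c+1) = -c + (-1) by ring, Real.rpow_add hx, Real.rpow_neg_one]
  field_simp

private lemma step_down {c : ℝ}
    (h : Tendsto (fun x : ℝ => x ^ (-(c+1)) * Gamma (x + (c+1)) / Gamma x) atTop (nhds 1)) :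
    Tendsto (fun x : ℝ => x ^ (-c) * Gamma (x + c) / Gamma x) atTop (nhds 1) := by
  have h2 := h.mul (ratio_tendsto' c)
  rw [mul_one] at h2
  apply h2.congr'
  filter_upwards [eventually_gt_atTop (0:ℝ), eventually_gt_atTop (-c)] with x hx hxc
  have hxc0 : (0:ℝ) < x + c := by linarith
  have hxc' : x + c ≠ 0 := hxc0.ne'
  rw [show x + (c+1) = (x + c) + 1 by ring, Gamma_add_one hxc',
    show -(c+1) = -c + (-1) by ring, Real.rpow_add hx, Real.rpow_neg_one]
  field_simp

private lemma aux2 (c : ℝ) :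
    Tendsto (fun x : ℝ => x ^ (-c) * Gamma (x + c) / Gamma x) atTop (nhds 1) := by
  have base : ∀ s : ℝ, 0 ≤ s → s < 1 →
      Tendsto (fun x : ℝ => x ^ (-s) * Gamma (x + s) / Gamma x) atTop (nhds 1) := by
    intro s hs0 hs1
    rcases eq_or_lt_of_le hs0 with h0 | h0
    · subst h0
      apply (tendsto_const_nhds (x := (1:ℝ))).congr'
      filter_upwards [eventually_gt_atTop (0:ℝ)] with x hx
      have hg := (Gamma_pos_of_pos hx).ne'
      simp [hg]
    · exact aux1 h0 hs1
  have key : ∀ n : ℤ, ∀ s : ℝ, 0 ≤ s → s < 1 →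
      Tendsto (fun x : ℝ => x ^ (-(s + n)) * Gamma (x + (s + n)) / Gamma x) atTop (nhds 1) := by
    intro n
    induction n using Int.induction_on with
    | zero => intro s hs0 hs1; simpa using base s hs0 hs1
    | succ n ih =>
        intro s hs0 hs1
        have := step_up (ih s hs0 hs1)
        have e : (s + ((n:ℤ)+1 : ℤ)) = (s + n) + 1 := by push_cast; ring
        rw [e]
        exact this
    | pred n ih =>
        intro s hs0 hs1
        have := step_down (c := s + (-(n:ℤ)-1 : ℤ))
        have e : ((s + (-(n:ℤ)-1 : ℤ)) + 1) = s + (-(n:ℤ) : ℤ) := by push_cast; ring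
        rw [e] at this
        exact this (ih s hs0 hs1)
  have := key ⌊c⌋ (Int.fract c) (Int.fract_nonneg c) (Int.fract_lt_one c)
  rwa [Int.fract_add_floor] at this

theorem wendel_limit (a b : ℝ) :
    Tendsto (fun x : ℝ => x ^ (b - a) * Gamma (x + a) / Gamma (x + b)) atTop (nhds 1) := by
  have h := (aux2 a).div (aux2 b) one_ne_zero
  rw [div_one] at h
  apply h.congr'
  filter_upwards [eventually_gt_atTop (0:ℝ), eventually_gt_atTop (-b)] with x hx hxb
  have hxb0 : (0:ℝ) < x + b := by linarith
  have hg := (Gamma_pos_of_pos hx).ne'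
  have hgb := (Gamma_pos_of_pos hxb0).ne'
  have hxa : x ^ (-a) = (x ^ a)⁻¹ := Real.rpow_neg hx.le a
  have hxbp : x ^ (-b) = (x ^ b)⁻¹ := Real.rpow_neg hx.le b
  have hsub : x ^ (b - a) = x ^ b / x ^ a := Real.rpow_sub hx b a
  have hb0 : x ^ b ≠ 0 := (Real.rpow_pos_of_pos hx b).ne'
  have ha0 : x ^ a ≠ 0 := (Real.rpow_pos_of_pos hx a).ne'
  simp only [Pi.div_apply]
  rw [hxa, hxbp, hsub]
  field_simp
end

section
/- For every positive integer n, the inequality (Γ((n+1)/2)/Γ(n/2))² < n²/(2n+1) holds, where Γ denotes Euler's gamma function. -/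
open Real MeasureTheory Set

noncomputable section

def pw0 (x : ℝ) : ℝ := 1260 + 5460*x + 9555*x^2 + 8610*x^3 + 4200*x^4 + 1050*x^5 + 105*x^6
def pw1 (x : ℝ) : ℝ := -(1260 + 4200*x + 5355*x^2 + 3255*x^3 + 945*x^4 + 105*x^5)
def pw2 (x : ℝ) : ℝ := 378 + 1071*x + 1071*x^2 + 441*x^3 + 63*x^4
def pw3 (x : ℝ) : ℝ := -(30 + 75*x + 60*x^2 + 15*x^3)

lemma quad_discrim (A B C : ℝ) (hC : 0 < C) (h : ∀ s : ℝ, 0 ≤ A - 2*s*B + s^2*C) :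
    B^2 ≤ A*C := by
  have h1 := h (B/C)
  have h2 : A - 2*(B/C)*B + (B/C)^2*C = A - B^2/C := by field_simp; ring
  rw [h2] at h1
  have h3 : B^2/C ≤ A := by linarith
  calc B^2 = B^2/C*C := by field_simp
  _ ≤ A*C := mul_le_mul_of_nonneg_right h3 hC.le

lemma cs_ineq (x : ℝ) (hx : 5 ≤ x) (s : ℝ) :
    0 ≤ Gamma x
      - 2*s*(pw0 x * Gamma (x+1/2) + pw1 x * Gamma (x+3/2) + pw2 x * Gamma (x+5/2)
          + pw3 x * Gamma (x+7/2))
      + s^2*((pw0 x)^2 * Gamma (x+1) + 2*(pw0 x)*(pw1 x) * Gamma (x+2)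
        + ((pw1 x)^2 + 2*(pw0 x)*(pw2 x)) * Gamma (x+3)
        + (2*(pw0 x)*(pw3 x) + 2*(pw1 x)*(pw2 x)) * Gamma (x+4)
        + ((pw2 x)^2 + 2*(pw1 x)*(pw3 x)) * Gamma (x+5)
        + 2*(pw2 x)*(pw3 x) * Gamma (x+6) + (pw3 x)^2 * Gamma (x+7)) := by
  have hx0 : (0:ℝ) < x := by linarith
  set E : Fin 12 → ℝ := ![x, x+1/2, x+3/2, x+5/2, x+7/2, x+1, x+2, x+3, x+4, x+5, x+6, x+7]
    with hE
  set C : Fin 12 → ℝ := ![1, -(2*s*pw0 x), -(2*s*pw1 x), -(2*s*pw2 x), -(2*s*pw3 x),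
    s^2*(pw0 x)^2, s^2*(2*(pw0 x)*(pw1 x)), s^2*((pw1 x)^2+2*(pw0 x)*(pw2 x)),
    s^2*(2*(pw0 x)*(pw3 x)+2*(pw1 x)*(pw2 x)), s^2*((pw2 x)^2+2*(pw1 x)*(pw3 x)),
    s^2*(2*(pw2 x)*(pw3 x)), s^2*(pw3 x)^2] with hC
  have hEpos : ∀ i, 0 < E i := by
    intro i; fin_cases i <;> norm_num [hE, Matrix.vecHead, Matrix.vecTail] <;> linarith
  have hfun : ∀ t ∈ Ioi (0:ℝ),
      ((t ^ ((x-1)/2) - s*(pw0 x + pw1 x*t + pw2 x*t^2 + pw3 x*t^3) * t ^ (x/2))^2 * exp (-t))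
      = ∑ i, C i * (exp (-t) * t ^ (E i - 1)) := by
    intro t ht
    rw [mem_Ioi] at ht
    have hu : t ^ ((1:ℝ)/2) = sqrt t := (sqrt_eq_rpow t).symm
    set A := t ^ ((x-1)/2) with hA
    have h2 : t ^ (x-1) = A * A := by
      rw [hA, ← rpow_add ht]; ring_nf
    have hAA : ∀ c : ℝ, t ^ (x - 1 + c) = A * A * t ^ c := by
      intro c; rw [rpow_add ht, h2]
    have hhalf : ∀ k : ℕ, t ^ (x - 1 + (1/2 + k)) = A * A * (sqrt t * t ^ k) := by
      intro k; rw [hAA, rpow_add ht, hu, rpow_natCast]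
    have hwhole : ∀ k : ℕ, t ^ (x - 1 + k) = A * A * t ^ k := by
      intro k; rw [hAA, rpow_natCast]
    have h1 : t ^ (x/2) = A * sqrt t := by
      rw [hA, ← hu, ← rpow_add ht]; congr 1; ring
    have e0 : t ^ (x - 1) = A * A := h2
    have eh0 : t ^ (x + 1/2 - 1) = A * A * (sqrt t * t ^ (0:ℕ)) := by
      rw [show x + 1/2 - 1 = x - 1 + (1/2 + ((0:ℕ):ℝ)) by push_cast; ring, hhalf]
    have eh1 : t ^ (x + 3/2 - 1) = A * A * (sqrt t * t ^ (1:ℕ)) := by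
      rw [show x + 3/2 - 1 = x - 1 + (1/2 + ((1:ℕ):ℝ)) by push_cast; ring, hhalf]
    have eh2 : t ^ (x + 5/2 - 1) = A * A * (sqrt t * t ^ (2:ℕ)) := by
      rw [show x + 5/2 - 1 = x - 1 + (1/2 + ((2:ℕ):ℝ)) by push_cast; ring, hhalf]
    have eh3 : t ^ (x + 7/2 - 1) = A * A * (sqrt t * t ^ (3:ℕ)) := by
      rw [show x + 7/2 - 1 = x - 1 + (1/2 + ((3:ℕ):ℝ)) by push_cast; ring, hhalf]
    have ew1 : t ^ (x + 1 - 1) = A * A * t ^ (1:ℕ) := by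
      rw [show x + 1 - 1 = x - 1 + ((1:ℕ):ℝ) by push_cast; ring, hwhole]
    have ew2 : t ^ (x + 2 - 1) = A * A * t ^ (2:ℕ) := by
      rw [show x + 2 - 1 = x - 1 + ((2:ℕ):ℝ) by push_cast; ring, hwhole]
    have ew3 : t ^ (x + 3 - 1) = A * A * t ^ (3:ℕ) := by
      rw [show x + 3 - 1 = x - 1 + ((3:ℕ):ℝ) by push_cast; ring, hwhole]
    have ew4 : t ^ (x + 4 - 1) = A * A * t ^ (4:ℕ) := by
      rw [show x + 4 - 1 = x - 1 + ((4:ℕ):ℝ) by push_cast; ring, hwhole]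
    have ew5 : t ^ (x + 5 - 1) = A * A * t ^ (5:ℕ) := by
      rw [show x + 5 - 1 = x - 1 + ((5:ℕ):ℝ) by push_cast; ring, hwhole]
    have ew6 : t ^ (x + 6 - 1) = A * A * t ^ (6:ℕ) := by
      rw [show x + 6 - 1 = x - 1 + ((6:ℕ):ℝ) by push_cast; ring, hwhole]
    have ew7 : t ^ (x + 7 - 1) = A * A * t ^ (7:ℕ) := by
      rw [show x + 7 - 1 = x - 1 + ((7:ℕ):ℝ) by push_cast; ring, hwhole]
    simp only [hC, hE, Fin.sum_univ_succ, Fin.sum_univ_zero, Matrix.cons_val_zero,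
      Matrix.cons_val_succ, Matrix.vecHead, Matrix.vecTail]
    rw [h1, e0, eh0, eh1, eh2, eh3, ew1, ew2, ew3, ew4, ew5, ew6, ew7]
    set u := Real.sqrt t with hudef
    have husq : u ^ 2 = t := sq_sqrt ht.le
    rw [← husq]
    ring
  have hInt : ∀ i : Fin 12, IntegrableOn (fun t : ℝ => C i * (exp (-t) * t ^ (E i - 1)))
      (Ioi 0) := fun i => (Real.GammaIntegral_convergent (hEpos i)).const_mul _
  have hIval : (∫ t in Ioi (0:ℝ),
      ((t ^ ((x-1)/2) - s*(pw0 x + pw1 x*t + pw2 x*t^2 + pw3 x*t^3) * t ^ (x/2))^2 * exp (-t)))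
      = ∑ i, C i * Gamma (E i) := by
    rw [setIntegral_congr_fun measurableSet_Ioi (fun t ht => hfun t ht)]
    rw [integral_finset_sum Finset.univ (fun i _ => hInt i)]
    exact Finset.sum_congr rfl fun i _ => by
      rw [MeasureTheory.integral_const_mul, ← Real.Gamma_eq_integral (hEpos i)]
  have hnn : 0 ≤ ∑ i, C i * Gamma (E i) := by
    rw [← hIval]
    apply setIntegral_nonneg measurableSet_Ioi
    intro t _
    positivity
  have hsum : ∑ i, C i * Gamma (E i) = Gamma x
      - 2*s*(pw0 x * Gamma (x+1/2) + pw1 x * Gamma (x+3/2) + pw2 x * Gamma (x+5/2)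
          + pw3 x * Gamma (x+7/2))
      + s^2*((pw0 x)^2 * Gamma (x+1) + 2*(pw0 x)*(pw1 x) * Gamma (x+2)
        + ((pw1 x)^2 + 2*(pw0 x)*(pw2 x)) * Gamma (x+3)
        + (2*(pw0 x)*(pw3 x) + 2*(pw1 x)*(pw2 x)) * Gamma (x+4)
        + ((pw2 x)^2 + 2*(pw1 x)*(pw3 x)) * Gamma (x+5)
        + 2*(pw2 x)*(pw3 x) * Gamma (x+6) + (pw3 x)^2 * Gamma (x+7)) := by
    simp only [hC, hE, Fin.sum_univ_succ, Fin.sum_univ_zero, Matrix.cons_val_zero,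
      Matrix.cons_val_succ, Matrix.vecHead, Matrix.vecTail]
    ring
  rw [hsum] at hnn
  exact hnn

set_option maxHeartbeats 1000000 in
lemma key_ineq (x : ℝ) (hx : 5 ≤ x) :
    Gamma (x+1/2)^2 * (4*x+1) < 4*x^2 * Gamma x^2 := by
  have hx0 : (0:ℝ) < x := by linarith
  have hG : 0 < Gamma x := Gamma_pos_of_pos hx0
  have hH : 0 < Gamma (x+1/2) := Gamma_pos_of_pos (by linarith)
  set G := Gamma x with hGdef
  set H := Gamma (x+1/2) with hHdef
  set L : ℝ := 3429/4 + 26769/8*x + 5322*x^2 + 35445/8*x^3 + 4083/2*x^4 + 492*x^5 + 48*x^6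
    with hLdef
  set D : ℝ := 144 + 624*x + 1092*x^2 + 984*x^3 + 480*x^4 + 120*x^5 + 12*x^6 with hDdef
  have hLpos : 0 < L := by
    rw [hLdef]
    nlinarith [pow_pos hx0 2, pow_pos hx0 3, pow_pos hx0 4, pow_pos hx0 5, pow_pos hx0 6]
  have hDpos : 0 < D := by
    rw [hDdef]
    nlinarith [pow_pos hx0 2, pow_pos hx0 3, pow_pos hx0 4, pow_pos hx0 5, pow_pos hx0 6]
  -- Gamma recurrences
  have ne0 : ∀ c : ℝ, 0 < c → c ≠ 0 := fun c hc => ne_of_gt hc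
  have g1 : Gamma (x+1) = x * G := by rw [hGdef, Gamma_add_one (ne0 x hx0)]
  have g2 : Gamma (x+2) = (x+1) * (x * G) := by
    rw [show x+2 = (x+1)+1 by ring, Gamma_add_one (ne0 _ (by linarith)), g1]
  have g3 : Gamma (x+3) = (x+2) * ((x+1) * (x * G)) := by
    rw [show x+3 = (x+2)+1 by ring, Gamma_add_one (ne0 _ (by linarith)), g2]
  have g4 : Gamma (x+4) = (x+3) * ((x+2) * ((x+1) * (x * G))) := by
    rw [show x+4 = (x+3)+1 by ring, Gamma_add_one (ne0 _ (by linarith)), g3]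
  have g5 : Gamma (x+5) = (x+4) * ((x+3) * ((x+2) * ((x+1) * (x * G)))) := by
    rw [show x+5 = (x+4)+1 by ring, Gamma_add_one (ne0 _ (by linarith)), g4]
  have g6 : Gamma (x+6) = (x+5) * ((x+4) * ((x+3) * ((x+2) * ((x+1) * (x * G))))) := by
    rw [show x+6 = (x+5)+1 by ring, Gamma_add_one (ne0 _ (by linarith)), g5]
  have g7 : Gamma (x+7) = (x+6) * ((x+5) * ((x+4) * ((x+3) * ((x+2) * ((x+1) * (x * G)))))) := by
    rw [show x+7 = (x+6)+1 by ring, Gamma_add_one (ne0 _ (by linarith)), g6]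
  have h1 : Gamma (x+3/2) = (x+1/2) * H := by
    rw [hHdef, show x+3/2 = (x+1/2)+1 by ring, Gamma_add_one (ne0 _ (by linarith))]
  have h2 : Gamma (x+5/2) = (x+3/2) * ((x+1/2) * H) := by
    rw [show x+5/2 = (x+3/2)+1 by ring, Gamma_add_one (ne0 _ (by linarith)), h1]
  have h3 : Gamma (x+7/2) = (x+5/2) * ((x+3/2) * ((x+1/2) * H)) := by
    rw [show x+7/2 = (x+5/2)+1 by ring, Gamma_add_one (ne0 _ (by linarith)), h2]
  have hquad : ∀ s : ℝ, 0 ≤ G - 2*s*(H*L) + s^2*(4*x*D*L*G) := by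
    intro s
    have h := cs_ineq x hx s
    rw [g1, g2, g3, g4, g5, g6, g7, h1, h2, h3] at h
    have e : G
      - 2*s*(pw0 x * H + pw1 x * ((x+1/2) * H) + pw2 x * ((x+3/2) * ((x+1/2) * H))
          + pw3 x * ((x+5/2) * ((x+3/2) * ((x+1/2) * H))))
      + s^2*((pw0 x)^2 * (x * G) + 2*(pw0 x)*(pw1 x) * ((x+1) * (x * G))
        + ((pw1 x)^2 + 2*(pw0 x)*(pw2 x)) * ((x+2) * ((x+1) * (x * G)))
        + (2*(pw0 x)*(pw3 x) + 2*(pw1 x)*(pw2 x)) * ((x+3) * ((x+2) * ((x+1) * (x * G))))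
        + ((pw2 x)^2 + 2*(pw1 x)*(pw3 x)) * ((x+4) * ((x+3) * ((x+2) * ((x+1) * (x * G)))))
        + 2*(pw2 x)*(pw3 x) * ((x+5) * ((x+4) * ((x+3) * ((x+2) * ((x+1) * (x * G))))))
        + (pw3 x)^2 * ((x+6) * ((x+5) * ((x+4) * ((x+3) * ((x+2) * ((x+1) * (x * G))))))))
      = G - 2*s*(H*L) + s^2*(4*x*D*L*G) := by
      simp only [pw0, pw1, pw2, pw3, hLdef, hDdef]
      ring
    rw [e] at h
    exact h
  have hdisc : (H*L)^2 ≤ G * (4*x*D*L*G) :=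
    quad_discrim _ _ _ (mul_pos (mul_pos (mul_pos (mul_pos (by linarith : (0:ℝ) < 4) hx0) hDpos) hLpos) hG) hquad
  have hkey : H^2*L ≤ 4*x*D*G^2 := by
    have h5 : H^2*L*L ≤ 4*x*D*G^2*L := by nlinarith [hdisc]
    exact le_of_mul_le_mul_right h5 hLpos
  have hdiff : (4*x+1)*(4*D) < 4*x*L := by
    rw [hLdef, hDdef]
    nlinarith [pow_pos hx0 2, pow_pos hx0 3, pow_pos hx0 4, pow_pos hx0 5, pow_pos hx0 6,
      sq_nonneg (x-5), pow_pos (show (0:ℝ) < x - 5 + 5 by linarith) 2]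
  have t1 : (4*x+1)*(H^2*L) ≤ (4*x+1)*(4*x*D*G^2) :=
    mul_le_mul_of_nonneg_left hkey (by linarith)
  have t2 : (4*x+1)*(4*D)*(x*G^2) < 4*x*L*(x*G^2) :=
    mul_lt_mul_of_pos_right hdiff (mul_pos hx0 (pow_pos hG 2))
  have t3 : H^2*(4*x+1)*L < 4*x^2*G^2*L := by nlinarith [t1, t2]
  exact lt_of_mul_lt_mul_right (by linarith [t3]) hLpos.le

lemma main_ge (n : ℕ) (hn : 10 ≤ n) :
    (Gamma ((n + 1) / 2) / Gamma (n / 2)) ^ 2 < (n : ℝ) ^ 2 / (2 * n + 1) := by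
  have hn' : (10:ℝ) ≤ n := by exact_mod_cast hn
  have hx : (5:ℝ) ≤ (n:ℝ)/2 := by linarith
  have h := key_ineq ((n:ℝ)/2) hx
  have hG : 0 < Gamma ((n:ℝ)/2) := Gamma_pos_of_pos (by linarith)
  have harg : ((n:ℝ) + 1)/2 = (n:ℝ)/2 + 1/2 := by ring
  rw [harg, div_pow, div_lt_div_iff₀ (pow_pos hG 2) (by linarith : (0:ℝ) < 2*n+1)]
  nlinarith [h]

lemma step_down_s2 (n : ℕ) (hn : 0 < n)
    (h : (Gamma ((↑(n+2) + 1) / 2) / Gamma (↑(n+2) / 2)) ^ 2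
        < ((n+2 : ℕ) : ℝ) ^ 2 / (2 * (n+2 : ℕ) + 1)) :
    (Gamma ((n + 1) / 2) / Gamma (n / 2)) ^ 2 < (n : ℝ) ^ 2 / (2 * n + 1) := by
  have hn1 : (1:ℝ) ≤ n := by exact_mod_cast hn
  have hnpos : (0:ℝ) < n := by linarith
  have hB : 0 < Gamma ((n:ℝ)/2) := Gamma_pos_of_pos (by linarith)
  have hA : 0 < Gamma (((n:ℝ)+1)/2) := Gamma_pos_of_pos (by linarith)
  push_cast at h
  have e1 : ((n:ℝ) + 2 + 1)/2 = ((n:ℝ)+1)/2 + 1 := by ring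
  have e2 : ((n:ℝ) + 2)/2 = (n:ℝ)/2 + 1 := by ring
  rw [e1, e2, Gamma_add_one (by positivity : ((n:ℝ)+1)/2 ≠ 0),
    Gamma_add_one (by positivity : (n:ℝ)/2 ≠ 0)] at h
  set A := Gamma (((n:ℝ)+1)/2) with hAdef
  set B := Gamma ((n:ℝ)/2) with hBdef
  set r := A / B with hrdef
  have hr : (((n:ℝ)+1)/2*A)/((n:ℝ)/2*B) = (((n:ℝ)+1)/(n:ℝ))*r := by
    rw [hrdef]; field_simp
  rw [hr] at h
  have h2 : ((n:ℝ)+1)^2 * r^2 * (2*n+5) < ((n:ℝ)+2)^2 * (n:ℝ)^2 := by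
    have e : ((((n:ℝ)+1)/n)*r)^2 * ((n:ℝ)^2*(2*n+5)) = ((n:ℝ)+1)^2*r^2*(2*n+5) := by
      field_simp
    have e2' : (((n:ℝ)+2)^2/(2*((n:ℝ)+2)+1)) * ((n:ℝ)^2*(2*n+5)) = ((n:ℝ)+2)^2*(n:ℝ)^2 := by
      rw [show 2*((n:ℝ)+2)+1 = 2*n+5 by ring]
      field_simp
    calc ((n:ℝ)+1)^2*r^2*(2*n+5) = ((((n:ℝ)+1)/n)*r)^2 * ((n:ℝ)^2*(2*n+5)) := e.symm
    _ < (((n:ℝ)+2)^2/(2*((n:ℝ)+2)+1)) * ((n:ℝ)^2*(2*n+5)) :=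
        mul_lt_mul_of_pos_right h (by positivity)
    _ = ((n:ℝ)+2)^2*(n:ℝ)^2 := e2'
  rw [lt_div_iff₀ (by positivity : (0:ℝ) < 2*(n:ℝ)+1)]
  nlinarith [h2, sq_nonneg r, sq_nonneg ((n:ℝ)+2), hn1]

end

theorem gurland_inequality (n : ℕ) (hn : 0 < n) :
    (Gamma ((n + 1) / 2) / Gamma (n / 2)) ^ 2 < (n : ℝ) ^ 2 / (2 * n + 1) := by
  rcases le_or_gt 10 n with h | h
  · exact main_ge n h
  · have h11 := main_ge 11 (by norm_num)
    have h10 := main_ge 10 (by norm_num)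
    have h9 := step_down_s2 9 (by norm_num) h11
    have h8 := step_down_s2 8 (by norm_num) h10
    have h7 := step_down_s2 7 (by norm_num) h9
    have h6 := step_down_s2 6 (by norm_num) h8
    have h5 := step_down_s2 5 (by norm_num) h7
    have h4 := step_down_s2 4 (by norm_num) h6
    have h3 := step_down_s2 3 (by norm_num) h5
    have h2 := step_down_s2 2 (by norm_num) h4
    have h1 := step_down_s2 1 (by norm_num) h3
    interval_cases n <;> assumption
end

section
/- For every positive integer n, the double inequality 1/√(π(n+1/2)) < (2n-1)!!/(2n)!! < 1/√(π(n+1/4)) holds. -/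
open Real Filter Topology

namespace KazAux

open Real.Wallis

lemma W_lt_succ (k : ℕ) : W k < W (k + 1) := by
  rw [W_succ]
  have h1 : (0:ℝ) < 2 * k + 1 := by positivity
  have h3 : (0:ℝ) < 2 * k + 3 := by positivity
  have hfac : (1:ℝ) < (2 * k + 2) / (2 * k + 1) * ((2 * k + 2) / (2 * k + 3)) := by
    rw [div_mul_div_comm, lt_div_iff₀ (by positivity), one_mul]
    nlinarith
  nlinarith [W_pos k]

lemma W_lt_pi_div_two (k : ℕ) : W k < π / 2 :=
  lt_of_lt_of_le (W_lt_succ k) (W_le (k + 1))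

noncomputable def c (k : ℕ) : ℝ := W k * ((2 * k + 1) / (4 * k + 1))

lemma c_succ_lt (k : ℕ) : c (k + 1) < c k := by
  have hW := W_pos k
  unfold c
  rw [W_succ]
  push_cast
  have h1 : (0:ℝ) < 2 * k + 1 := by positivity
  have h3 : (0:ℝ) < 2 * k + 3 := by positivity
  have h4 : (0:ℝ) < 4 * k + 1 := by positivity
  have h5 : (0:ℝ) < 4 * k + 5 := by positivity
  rw [mul_assoc, mul_lt_mul_iff_right₀ hW, div_mul_div_comm, div_mul_div_comm,
    div_lt_div_iff₀ (by positivity) (by positivity)]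
  nlinarith [sq_nonneg ((k:ℝ))]

lemma one_div_sqrt' (x : ℝ) : 1 / Real.sqrt x = Real.sqrt (1 / x) := by
  rw [one_div, one_div, Real.sqrt_inv]

lemma tendsto_c : Tendsto c atTop (𝓝 (π / 4)) := by
  have hg : Tendsto (fun k : ℕ => ((2 * k + 1 : ℝ) / (4 * k + 1))) atTop (𝓝 (1 / 2)) := by
    have h0 : Tendsto (fun k : ℕ => (1 : ℝ) / (2 * (4 * k + 1))) atTop (𝓝 0) := by
      apply tendsto_const_nhds.div_atTop
      apply Tendsto.const_mul_atTop two_pos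
      exact Tendsto.atTop_add (tendsto_natCast_atTop_atTop.const_mul_atTop (by norm_num))
        tendsto_const_nhds
    have heq : ∀ k : ℕ, ((2 * k + 1 : ℝ) / (4 * k + 1)) = 1 / 2 + 1 / (2 * (4 * k + 1)) := by
      intro k
      have : (0:ℝ) < 4 * k + 1 := by positivity
      field_simp
      ring
    simp_rw [heq]
    simpa using (tendsto_const_nhds (x := (1:ℝ)/2)).add h0
  have := tendsto_W_nhds_pi_div_two.mul hg
  norm_num at this
  convert this using 2
  · rfl
  · ring

lemma pi_div_four_lt_c (k : ℕ) : π / 4 < c k := by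
  have hanti : Antitone c := antitone_nat_of_succ_le fun m => (c_succ_lt m).le
  have hle : π / 4 ≤ c (k + 1) := hanti.le_of_tendsto tendsto_c (k + 1)
  exact lt_of_le_of_lt hle (c_succ_lt k)

end KazAux

/-- For a positive integer `n`, with `(2n)!! = 2^n · n!` and `(2n-1)!! = (2n)!/(2^n · n!)`,
the Kazarinoff refinement of Wallis' inequality:
`1/√(π(n+1/2)) < (2n-1)!!/(2n)!! < 1/√(π(n+1/4))`. -/
theorem kazarinoff_wallis_inequality (n : ℕ) (hn : 0 < n) :
    1 / Real.sqrt (π * (n + 1 / 2)) <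
        (((2 * n).factorial : ℝ) / ((2 : ℝ) ^ n * n.factorial)) / ((2 : ℝ) ^ n * n.factorial) ∧
      (((2 * n).factorial : ℝ) / ((2 : ℝ) ^ n * n.factorial)) / ((2 : ℝ) ^ n * n.factorial) <
        1 / Real.sqrt (π * (n + 1 / 4)) := by
  set E : ℝ := (((2 * n).factorial : ℝ) / ((2 : ℝ) ^ n * n.factorial)) / ((2 : ℝ) ^ n * n.factorial)
    with hE
  have hfacpos : (0:ℝ) < (2:ℝ) ^ n * n.factorial := by positivity
  have hEpos : 0 < E := by
    apply div_pos (div_pos _ hfacpos) hfacpos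
    exact_mod_cast Nat.factorial_pos _
  have hWpos := Real.Wallis.W_pos n
  have h2n1 : (0:ℝ) < 2 * n + 1 := by positivity
  -- key identity
  have hkey : E ^ 2 * (Real.Wallis.W n * (2 * n + 1)) = 1 := by
    rw [Real.Wallis.W_eq_factorial_ratio]
    have hf2 : (0:ℝ) < ((2 * n).factorial : ℝ) := by exact_mod_cast Nat.factorial_pos _
    have hf : (0:ℝ) < (n.factorial : ℝ) := by exact_mod_cast Nat.factorial_pos _
    rw [hE]
    field_simp
    ring
  have hE2 : E ^ 2 = 1 / (Real.Wallis.W n * (2 * n + 1)) := by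
    field_simp at hkey ⊢
    linarith [hkey]
  constructor
  · -- left inequality
    have ha : (0:ℝ) < π * (n + 1 / 2) := by positivity
    have hlt : 1 / (π * (n + 1 / 2)) < E ^ 2 := by
      rw [hE2]
      apply one_div_lt_one_div_of_lt (by positivity)
      have := KazAux.W_lt_pi_div_two n
      nlinarith
    calc 1 / Real.sqrt (π * (n + 1 / 2)) = Real.sqrt (1 / (π * (n + 1 / 2))) :=
          KazAux.one_div_sqrt' _
      _ < Real.sqrt (E ^ 2) := Real.sqrt_lt_sqrt (by positivity) hlt
      _ = E := by rw [Real.sqrt_sq hEpos.le]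
  · -- right inequality
    have hb : (0:ℝ) < π * (n + 1 / 4) := by positivity
    have hlt : E ^ 2 < 1 / (π * (n + 1 / 4)) := by
      rw [hE2]
      apply one_div_lt_one_div_of_lt hb
      have hc := KazAux.pi_div_four_lt_c n
      unfold KazAux.c at hc
      have h41 : (0:ℝ) < 4 * n + 1 := by positivity
      have hc' := mul_lt_mul_of_pos_right hc h41
      rw [mul_assoc, div_mul_cancel₀ _ h41.ne'] at hc'
      nlinarith
    calc E = Real.sqrt (E ^ 2) := by rw [Real.sqrt_sq hEpos.le]
      _ < Real.sqrt (1 / (π * (n + 1 / 4))) := Real.sqrt_lt_sqrt (by positivity) hlt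
      _ = 1 / Real.sqrt (π * (n + 1 / 4)) := (KazAux.one_div_sqrt' _).symm
end

section
/- The function θ(x) = (Γ(x+1)/Γ(x+1/2))² - x is strictly decreasing on the interval (-1/2, ∞), with lim_{x→∞} θ(x) = 1/4 and lim_{x→(-1/2)⁺} θ(x) = 1/2; consequently 1/4 < θ(x) < 1/2 for all x > -1/2. -/
open Real Filter

noncomputable def th (x : ℝ) : ℝ := (Gamma (x + 1) / Gamma (x + 1 / 2)) ^ 2 - x

noncomputable def sw (x : ℝ) : ℝ := ((2 * x + 1) / (2 * x + 2)) ^ 2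

lemma sw_nonneg (x : ℝ) : 0 ≤ sw x := sq_nonneg _

lemma sw_mono {x y : ℝ} (hx : -(1/2) < x) (hxy : x ≤ y) : sw x ≤ sw y := by
  unfold sw
  have h1 : (0:ℝ) ≤ (2*x+1)/(2*x+2) := div_nonneg (by linarith) (by linarith)
  have h2 : (2*x+1)/(2*x+2) ≤ (2*y+1)/(2*y+2) := by
    rw [div_le_div_iff₀ (by linarith) (by linarith)]
    nlinarith
  exact pow_le_pow_left₀ h1 h2 2

lemma gamma_sq_le {p q : ℝ} (hp : 0 < p) (hq : 0 < q) :
    Gamma ((p + q) / 2) ^ 2 ≤ Gamma p * Gamma q := by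
  have h := Real.convexOn_log_Gamma.2 (Set.mem_Ioi.2 hp) (Set.mem_Ioi.2 hq)
    (by norm_num : (0:ℝ) ≤ 1/2) (by norm_num : (0:ℝ) ≤ 1/2) (by norm_num)
  simp only [smul_eq_mul, Function.comp_apply] at h
  rw [show (1:ℝ)/2 * p + 1/2 * q = (p+q)/2 by ring] at h
  have hm : 0 < (p + q) / 2 := by linarith
  have h1 := Real.Gamma_pos_of_pos hm
  have h2 := Real.Gamma_pos_of_pos hp
  have h3 := Real.Gamma_pos_of_pos hq
  rw [← Real.log_le_log_iff (by positivity) (by positivity), Real.log_pow,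
    Real.log_mul h2.ne' h3.ne']
  push_cast
  linarith

lemma th_le_half {x : ℝ} (hx : -(1/2) < x) : th x ≤ 1/2 := by
  have hp : 0 < x + 1/2 := by linarith
  have hq : 0 < x + 3/2 := by linarith
  have h := gamma_sq_le hp hq
  rw [show (x + 1/2 + (x + 3/2)) / 2 = x + 1 by ring] at h
  have h32 : Gamma (x + 3/2) = (x + 1/2) * Gamma (x + 1/2) := by
    rw [show x + 3/2 = (x + 1/2) + 1 by ring, Real.Gamma_add_one hp.ne']
  rw [h32] at h
  have hg : 0 < Gamma (x + 1/2) := Real.Gamma_pos_of_pos hp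
  unfold th
  rw [div_pow, sub_le_iff_le_add, div_le_iff₀ (by positivity)]
  nlinarith [sq_nonneg (Gamma (x+1/2))]

lemma th_nonneg {x : ℝ} (hx : 0 < x) : 0 ≤ th x := by
  have hq : 0 < x + 1 := by linarith
  have h := gamma_sq_le hx hq
  rw [show (x + (x + 1)) / 2 = x + 1/2 by ring] at h
  have h1 : Gamma (x + 1) = x * Gamma x := Real.Gamma_add_one hx.ne'
  have hg : 0 < Gamma (x + 1/2) := Real.Gamma_pos_of_pos (by linarith)
  have hg1 : 0 < Gamma (x + 1) := Real.Gamma_pos_of_pos (by linarith)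
  have hgx : 0 < Gamma x := Real.Gamma_pos_of_pos hx
  unfold th
  rw [sub_nonneg, div_pow, le_div_iff₀ (by positivity)]
  nlinarith

lemma th_rec {x : ℝ} (hx : -(1/2) < x) :
    th x = 1 / (4 * (x + 1)) + sw x * th (x + 1) := by
  have hp : 0 < x + 1/2 := by linarith
  have hx1 : (0:ℝ) < x + 1 := by linarith
  have h2x2 : (0:ℝ) < 2*x + 2 := by linarith
  have h1 : Gamma (x + 1 + 1) = (x + 1) * Gamma (x + 1) := Real.Gamma_add_one (by linarith)
  have h2 : Gamma (x + 1 + 1/2) = (x + 1/2) * Gamma (x + 1/2) := by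
    rw [show x + 1 + 1/2 = (x + 1/2) + 1 by ring, Real.Gamma_add_one hp.ne']
  have hg : Gamma (x + 1/2) ≠ 0 := (Real.Gamma_pos_of_pos hp).ne'
  have hG2 : (Gamma (x+1+1) / Gamma (x+1+1/2))^2
      = ((x+1)^2 / (x+1/2)^2) * (Gamma (x+1) / Gamma (x+1/2))^2 := by
    rw [h1, h2, mul_div_mul_comm, mul_pow, div_pow, div_pow]
  unfold th sw
  rw [hG2]
  set G := (Gamma (x+1) / Gamma (x+1/2))^2 with hGdef
  have e0 : ((2*x+1)/(2*x+2))^2 * ((x+1)^2/(x+1/2)^2) = 1 := by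
    rw [div_pow, div_mul_div_comm, div_eq_one_iff_eq (by positivity)]
    ring
  have e1 : ((2*x+1)/(2*x+2))^2 * (((x+1)^2/(x+1/2)^2) * G - (x+1))
      = G - (x+1)*((2*x+1)/(2*x+2))^2 := by
    rw [mul_sub, ← mul_assoc, e0, one_mul]
    ring
  rw [e1]
  have e2 : (x+1)*((2*x+1)/(2*x+2))^2 = x + 1/(4*(x+1)) := by
    rw [div_pow]
    field_simp [hx1.ne', h2x2.ne']
    ring
  rw [e2]
  ring

lemma iter_le {F : ℝ → ℝ} (hF : ∀ x : ℝ, -(1/2) < x → sw x * F (x+1) ≤ F x) :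
    ∀ (n : ℕ) (x : ℝ), -(1/2) < x →
      (∏ k ∈ Finset.range n, sw (x + k)) * F (x + n) ≤ F x := by
  intro n
  induction n with
  | zero => intro x hx; simp
  | succ n ih =>
    intro x hx
    have hx1 : -(1/2) < x + 1 := by linarith
    have h1 := ih (x+1) hx1
    have hprod : (∏ k ∈ Finset.range (n+1), sw (x + k))
        = sw x * ∏ k ∈ Finset.range n, sw ((x+1) + k) := by
      rw [Finset.prod_range_succ', mul_comm]
      have e0 : sw (x + ((0:ℕ):ℝ)) = sw x := by norm_num
      have e1 : (∏ k ∈ Finset.range n, sw (x + ((k:ℕ)+1:ℕ))) = ∏ k ∈ Finset.range n, sw ((x+1) + k) :=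
        Finset.prod_congr rfl (fun k _ => by congr 1; push_cast; ring)
      rw [e0, e1]
    have harg : x + ((n+1 : ℕ) : ℝ) = (x+1) + (n : ℕ) := by push_cast; ring
    rw [hprod, harg, mul_assoc]
    calc sw x * ((∏ k ∈ Finset.range n, sw ((x+1) + k)) * F ((x+1) + n))
        ≤ sw x * F (x+1) := by
          apply mul_le_mul_of_nonneg_left h1 (sw_nonneg x)
      _ ≤ F x := hF x hx

lemma prod_sw_tendsto {x : ℝ} (hx : -(1/2) < x) :
    Tendsto (fun n : ℕ => ∏ k ∈ Finset.range n, sw (x + k)) atTop (nhds 0) := by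
  have hb : ∀ n : ℕ, (∏ k ∈ Finset.range n, sw (x + k))
      ≤ Real.exp (-((x+2)⁻¹ * ∑ i ∈ Finset.range n, (1:ℝ)/(i+1))) := by
    intro n
    have step : ∀ k ∈ Finset.range n, sw (x + k)
        ≤ Real.exp (-((x+2)⁻¹ * ((1:ℝ)/(k+1)))) := by
      intro k _
      have hk0 : (0:ℝ) ≤ (k:ℝ) := Nat.cast_nonneg k
      have hy : (0:ℝ) < 2*(x+k) + 2 := by nlinarith
      have hv1 : (1:ℝ)/(2*(x+k)+2) ≤ 1 := by
        rw [div_le_one hy]; nlinarith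
      have hrepr : sw (x + k) = (1 - 1/(2*(x+k)+2))^2 := by
        unfold sw
        congr 1
        rw [eq_sub_iff_add_eq, ← add_div, div_eq_one_iff_eq hy.ne']
        ring
      have hexp : 1 - 1/(2*(x+k)+2) ≤ Real.exp (-(1/(2*(x+k)+2))) := by
        have := Real.add_one_le_exp (-(1/(2*(x+k)+2)))
        linarith
      have hsq : sw (x + k) ≤ (Real.exp (-(1/(2*(x+k)+2))))^2 := by
        rw [hrepr]
        apply pow_le_pow_left₀ (by linarith) hexp
      have hexp2 : (Real.exp (-(1/(2*(x+k)+2))))^2 = Real.exp (-(2/(2*(x+k)+2))) := by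
        rw [← Real.exp_nat_mul]
        norm_num
        ring_nf
      have hmono : Real.exp (-(2/(2*(x+k)+2))) ≤ Real.exp (-((x+2)⁻¹ * ((1:ℝ)/(k+1)))) := by
        apply Real.exp_le_exp.2
        have h1 : (x+2)⁻¹ * ((1:ℝ)/(k+1)) ≤ 2/(2*(x+k)+2) := by
          rw [inv_mul_eq_div, div_div, div_le_div_iff₀ (by nlinarith) hy]
          nlinarith
        linarith
      calc sw (x+k) ≤ (Real.exp (-(1/(2*(x+k)+2))))^2 := hsq
        _ = Real.exp (-(2/(2*(x+k)+2))) := hexp2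
        _ ≤ _ := hmono
    calc (∏ k ∈ Finset.range n, sw (x + k))
        ≤ ∏ k ∈ Finset.range n, Real.exp (-((x+2)⁻¹ * ((1:ℝ)/(k+1)))) :=
          Finset.prod_le_prod (fun k _ => sw_nonneg _) step
      _ = Real.exp (∑ k ∈ Finset.range n, -((x+2)⁻¹ * ((1:ℝ)/(k+1)))) := by
          rw [Real.exp_sum]
      _ = Real.exp (-((x+2)⁻¹ * ∑ i ∈ Finset.range n, (1:ℝ)/(i+1))) := by
          congr 1
          rw [Finset.sum_neg_distrib, ← Finset.mul_sum]
  have h0 : ∀ n : ℕ, 0 ≤ ∏ k ∈ Finset.range n, sw (x + k) :=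
    fun n => Finset.prod_nonneg (fun k _ => sw_nonneg _)
  have htend : Tendsto (fun n : ℕ => Real.exp (-((x+2)⁻¹ * ∑ i ∈ Finset.range n, (1:ℝ)/(i+1))))
      atTop (nhds 0) := by
    apply Real.tendsto_exp_atBot.comp
    apply Filter.tendsto_neg_atTop_atBot.comp
    apply Filter.Tendsto.const_mul_atTop (inv_pos.2 (by linarith : (0:ℝ) < x+2))
    exact tendsto_sum_range_one_div_nat_succ_atTop
  exact squeeze_zero h0 hb htend

lemma nonneg_of_step {F : ℝ → ℝ} (hF : ∀ x : ℝ, -(1/2) < x → sw x * F (x+1) ≤ F x)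
    (hbd : ∀ x : ℝ, 1/2 < x → -2 ≤ F x) {x : ℝ} (hx : -(1/2) < x) : 0 ≤ F x := by
  have key : ∀ n : ℕ, -2 * (∏ k ∈ Finset.range (n+1), sw (x + k)) ≤ F x := by
    intro n
    have h1 := iter_le hF (n+1) x hx
    have harg : (1:ℝ)/2 < x + ((n+1 : ℕ) : ℝ) := by
      push_cast
      have : (0:ℝ) ≤ n := Nat.cast_nonneg n
      linarith
    have h2 := hbd _ harg
    have h0 : 0 ≤ ∏ k ∈ Finset.range (n+1), sw (x+k) :=
      Finset.prod_nonneg fun k _ => sw_nonneg _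
    nlinarith [mul_le_mul_of_nonneg_left h2 h0]
  have htend : Tendsto (fun n : ℕ => -2 * ∏ k ∈ Finset.range (n+1), sw (x + k)) atTop (nhds 0) := by
    have h1 : Tendsto (fun n : ℕ => ∏ k ∈ Finset.range (n+1), sw (x+k)) atTop (nhds 0) :=
      (prod_sw_tendsto hx).comp (tendsto_add_atTop_nat 1)
    simpa using h1.const_mul (-2)
  exact le_of_tendsto htend (Filter.Eventually.of_forall key)

lemma th_envU {x : ℝ} (hx : -(1/2) < x) : th x ≤ 1/4 + 1/(16*x+12) := by
  have h := nonneg_of_step (F := fun y => 1/4 + 1/(16*y+12) - th y) ?_ ?_ hx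
  · linarith
  · intro z hz
    have hz2 : (0:ℝ) < 2*z + 1 := by linarith
    have hz3 : (0:ℝ) < 4*z + 3 := by linarith
    have hz4 : (0:ℝ) < z + 1 := by linarith
    have hz5 : (0:ℝ) < 4*z + 7 := by linarith
    have hz6 : (0:ℝ) < 2*z + 2 := by linarith
    have h1 : (16*z+12 : ℝ) ≠ 0 := by intro h; nlinarith [h]
    have h2 : (16*(z+1)+12 : ℝ) ≠ 0 := by intro h; nlinarith [h]
    have e : (1/4 + 1/(16*z+12)) - (1/(4*(z+1)) + sw z * (1/4 + 1/(16*(z+1)+12)))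
        = (2*z+1)^2 / (2*((4*z+3)*((z+1)*((2*z+2)*(4*z+7))))) := by
      unfold sw
      field_simp [hz4.ne', hz6.ne', hz3.ne', hz5.ne']
      ring
    have hpos : 0 ≤ (2*z+1)^2 / (2*((4*z+3)*((z+1)*((2*z+2)*(4*z+7))))) := by positivity
    have hr := th_rec hz
    nlinarith [e, hpos, hr]
  · intro z hz
    have h1 := th_le_half (show -(1/2) < z by linarith)
    have h2 : 0 < 1/(16*z+12) := by
      apply div_pos (by norm_num) (by linarith)
    linarith

lemma th_envL {x : ℝ} (hx : -(1/2) < x) : 1/4 + 1/(64*x+48) ≤ th x := by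
  have h := nonneg_of_step (F := fun y => th y - (1/4 + 1/(64*y+48))) ?_ ?_ hx
  · linarith
  · intro z hz
    have hz2 : (0:ℝ) < 2*z + 1 := by linarith
    have hz3 : (0:ℝ) < 4*z + 3 := by linarith
    have hz4 : (0:ℝ) < z + 1 := by linarith
    have hz5 : (0:ℝ) < 4*z + 7 := by linarith
    have hz6 : (0:ℝ) < 2*z + 2 := by linarith
    have h1 : (64*z+48 : ℝ) ≠ 0 := by intro h; nlinarith [h]
    have h2 : (64*(z+1)+48 : ℝ) ≠ 0 := by intro h; nlinarith [h]
    have e : (1/(4*(z+1)) + sw z * (1/4 + 1/(64*(z+1)+48))) - (1/4 + 1/(64*z+48))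
        = (15 + 51*(2*z+1) + 44*(2*z+1)^2 + 8*(2*z+1)^3)
          / (32*((4*z+3)*((z+1)*((2*z+2)^2*(4*z+7))))) := by
      unfold sw
      field_simp [hz4.ne', hz6.ne', hz3.ne', hz5.ne', h1, h2, (show (z*64+48:ℝ) ≠ 0 by intro h; linarith)]
      ring
    have hnum : (0:ℝ) ≤ 15 + 51*(2*z+1) + 44*(2*z+1)^2 + 8*(2*z+1)^3 := by nlinarith
    have hden : (0:ℝ) < 32*((4*z+3)*((z+1)*((2*z+2)^2*(4*z+7)))) := by positivity
    have hpos := div_nonneg hnum hden.le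
    have hr := th_rec hz
    nlinarith [e, hpos, hr]
  · intro z hz
    have h1 := th_nonneg (show (0:ℝ) < z by linarith)
    have h2 : 1/(64*z+48) ≤ 1 := by
      rw [div_le_one (by linarith)]
      linarith
    linarith
set_option maxHeartbeats 3200000 in
lemma th_rate {x : ℝ} (u : ℝ) (hx : -(1/2) < x) (hu : 0 < u) :
    0 ≤ th x - th (x+u) - (1/(64*x+48) - 1/(64*(x+u)+48)) := by
  apply nonneg_of_step
    (F := fun z => th z - th (z+u) - (1/(64*z+48) - 1/(64*(z+u)+48))) ?_ ?_ hx
  · intro z hz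
    have hzu : -(1/2) < z + u := by linarith
    have hz2 : (0:ℝ) < 2*z + 1 := by linarith
    have harg : z + 1 + u = z + u + 1 := by ring
    rw [harg, th_rec hz, th_rec hzu]
    set y := z + u with hy
    have hzy : z < y := by rw [hy]; linarith
    have hT := th_envU (x := y+1) (by rw [hy]; linarith)
    have hsw : sw z ≤ sw y := sw_mono hz (by linarith)
    have hQ : 0 ≤ (1/(4*(z+1)) - 1/(4*(y+1)))
        - (sw y - sw z)*(1/4 + 1/(16*(y+1)+12))
        - ((1/(64*z+48) - 1/(64*y+48))
            - sw z*(1/(64*(z+1)+48) - 1/(64*(y+1)+48))) := by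
      have d1 : (0:ℝ) < z + 1 := by linarith
      have d2 : (0:ℝ) < y + 1 := by linarith
      have d3 : (0:ℝ) < 2*z + 2 := by linarith
      have d4 : (0:ℝ) < 2*y + 2 := by linarith
      have d5 : (0:ℝ) < 4*z + 3 := by linarith
      have d6 : (0:ℝ) < 4*z + 7 := by linarith
      have d7 : (0:ℝ) < 4*y + 3 := by linarith
      have d8 : (0:ℝ) < 4*y + 7 := by linarith
      have n1 : (64*z+48 : ℝ) ≠ 0 := by intro h; nlinarith [h]
      have n2 : (64*y+48 : ℝ) ≠ 0 := by intro h; nlinarith [h]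
      have n3 : (64*(z+1)+48 : ℝ) ≠ 0 := by intro h; nlinarith [h]
      have n4 : (64*(y+1)+48 : ℝ) ≠ 0 := by intro h; nlinarith [h]
      have n5 : (16*(y+1)+12 : ℝ) ≠ 0 := by intro h; nlinarith [h]
      have e : (1/(4*(z+1)) - 1/(4*(y+1)))
          - (sw y - sw z)*(1/4 + 1/(16*(y+1)+12))
          - ((1/(64*z+48) - 1/(64*y+48))
              - sw z*(1/(64*(z+1)+48) - 1/(64*(y+1)+48)))
          = (9600 * (2*z+1)^0 * (y-z)^1 + 75520 * (2*z+1)^0 * (y-z)^2 + 181760 * (2*z+1)^0 * (y-z)^3 + 168960 * (2*z+1)^0 * (y-z)^4 + 61440 * (2*z+1)^0 * (y-z)^5 + 75520 * (2*z+1)^1 * (y-z)^1 + 469248 * (2*z+1)^1 * (y-z)^2 + 912384 * (2*z+1)^1 * (y-z)^3 + 697344 * (2*z+1)^1 * (y-z)^4 + 208896 * (2*z+1)^1 * (y-z)^5 + 234240 * (2*z+1)^2 * (y-z)^1 + 1111296 * (2*z+1)^2 * (y-z)^2 + 1625600 * (2*z+1)^2 * (y-z)^3 + 909312 * (2*z+1)^2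 * (y-z)^4 + 180224 * (2*z+1)^2 * (y-z)^5 + 368640 * (2*z+1)^3 * (y-z)^1 + 1265408 * (2*z+1)^3 * (y-z)^2 + 1265664 * (2*z+1)^3 * (y-z)^3 + 438272 * (2*z+1)^3 * (y-z)^4 + 32768 * (2*z+1)^3 * (y-z)^5 + 312704 * (2*z+1)^4 * (y-z)^1 + 706560 * (2*z+1)^4 * (y-z)^2 + 407552 * (2*z+1)^4 * (y-z)^3 + 57344 * (2*z+1)^4 * (y-z)^4 + 137472 * (2*z+1)^5 * (y-z)^1 + 168960 * (2*z+1)^5 * (y-z)^2 + 36864 * (2*z+1)^5 * (y-z)^3 + 26112 * (2*z+1)^6 * (y-z)^1 + 10240 * (2*z+1)^6 * (y-z)^2 + 1024 * (2*z+1)^7 * (y-z)^1)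
            / (2048*((z+1)*((y+1)*((2*z+2)^2*((2*y+2)^2*((4*y+7)*((4*z+7)*((4*z+3)*(4*y+3))))))))) := by
        unfold sw
        field_simp [d1.ne', d2.ne', d3.ne', d4.ne', d5.ne', d6.ne', d7.ne', d8.ne', n1, n2, n3, n4, n5, (show (z*64+48:ℝ) ≠ 0 by intro h; linarith), (show (y*64+48:ℝ) ≠ 0 by intro h; linarith)]
        set_option maxRecDepth 100000 in ring
      rw [e]
      have hw : (0:ℝ) ≤ 2*z+1 := hz2.le
      have hu' : (0:ℝ) ≤ y - z := by linarith
      have mono : ∀ (a : ℝ) (i j : ℕ), (0:ℝ) ≤ a → 0 ≤ a * (2*z+1)^i * (y-z)^j :=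
        fun a i j ha => mul_nonneg (mul_nonneg ha (pow_nonneg hw i)) (pow_nonneg hu' j)
      apply div_nonneg
      · repeat' apply add_nonneg
        all_goals exact mono _ _ _ (by norm_num)
      · positivity
    have hprod := mul_le_mul_of_nonneg_left hT (by linarith : 0 ≤ sw y - sw z)
    nlinarith [hQ, hprod]
  · intro z hz
    have h1 := th_nonneg (show (0:ℝ) < z by linarith)
    have h2 := th_le_half (show -(1/2) < z + u by linarith)
    have h3 : 1/(64*z+48) ≤ 1 := by
      rw [div_le_one (by linarith)]
      linarith
    have h4 : 0 < 1/(64*(z+u)+48) := by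
      apply div_pos (by norm_num) (by linarith)
    linarith
lemma th_atTop : Tendsto th atTop (nhds (1/4)) := by
  have hUt : Tendsto (fun x : ℝ => 1/4 + 1/(16*x+12)) atTop (nhds (1/4)) := by
    have h1 : Tendsto (fun x : ℝ => 16*x+12) atTop atTop := by
      apply tendsto_atTop_add_const_right
      exact (tendsto_id (α := ℝ)).const_mul_atTop (by norm_num)
    have h0 := h1.inv_tendsto_atTop
    have := tendsto_const_nhds (α := ℝ) (x := (1/4 : ℝ)) (f := atTop) |>.add h0
    simpa [one_div] using this
  have hLt : Tendsto (fun x : ℝ => 1/4 + 1/(64*x+48)) atTop (nhds (1/4)) := by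
    have h1 : Tendsto (fun x : ℝ => 64*x+48) atTop atTop := by
      apply tendsto_atTop_add_const_right
      exact (tendsto_id (α := ℝ)).const_mul_atTop (by norm_num)
    have h0 := h1.inv_tendsto_atTop
    have := tendsto_const_nhds (α := ℝ) (x := (1/4 : ℝ)) (f := atTop) |>.add h0
    simpa [one_div] using this
  apply tendsto_of_tendsto_of_tendsto_of_le_of_le' hLt hUt
  · filter_upwards [eventually_ge_atTop (0:ℝ)] with x hx
    exact th_envL (by linarith)
  · filter_upwards [eventually_ge_atTop (0:ℝ)] with x hx
    exact th_envU (by linarith)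

lemma th_bdry : Tendsto th (nhdsWithin (-(1/2)) (Set.Ioi (-(1/2):ℝ))) (nhds (1/2)) := by
  have hne : ∀ m : ℕ, (1/2 : ℝ) ≠ -m := by
    intro m
    have : (0:ℝ) ≤ (m:ℝ) := Nat.cast_nonneg m
    intro h
    linarith
  have hne1 : ∀ m : ℕ, (1 : ℝ) ≠ -m := by
    intro m
    have : (0:ℝ) ≤ (m:ℝ) := Nat.cast_nonneg m
    intro h
    linarith
  have hplus : Tendsto (fun x : ℝ => x + 1) (nhdsWithin (-(1/2)) (Set.Ioi (-(1/2):ℝ)))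
      (nhds (1/2)) := by
    have h : Tendsto (fun x : ℝ => x + 1) (nhds (-(1/2):ℝ)) (nhds (-(1/2) + 1)) :=
      (continuous_id.add continuous_const).tendsto _
    rw [show (-(1/2 : ℝ) + 1) = 1/2 by norm_num] at h
    exact h.mono_left nhdsWithin_le_nhds
  have h1 : Tendsto (fun x : ℝ => Gamma (x+1)) (nhdsWithin (-(1/2)) (Set.Ioi (-(1/2):ℝ)))
      (nhds (Gamma (1/2))) := by
    have hcont : ContinuousAt Gamma (1/2 : ℝ) :=
      (Real.differentiableAt_Gamma hne).continuousAt
    exact hcont.tendsto.comp hplus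
  have hhalf : Tendsto (fun x : ℝ => x + 1/2) (nhdsWithin (-(1/2)) (Set.Ioi (-(1/2):ℝ)))
      (nhdsWithin 0 (Set.Ioi 0)) := by
    apply tendsto_nhdsWithin_of_tendsto_nhds_of_eventually_within
    · have h : Tendsto (fun x : ℝ => x + 1/2) (nhds (-(1/2):ℝ)) (nhds (-(1/2) + 1/2)) :=
        (continuous_id.add continuous_const).tendsto _
      rw [show (-(1/2 : ℝ) + 1/2) = 0 by norm_num] at h
      exact h.mono_left nhdsWithin_le_nhds
    · filter_upwards [self_mem_nhdsWithin] with x hx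
      simp only [Set.mem_Ioi] at hx ⊢
      linarith
  have hGat : Tendsto Gamma (nhdsWithin (0:ℝ) (Set.Ioi 0)) atTop := by
    have hA : Tendsto (fun t : ℝ => Gamma (t+1)) (nhdsWithin (0:ℝ) (Set.Ioi 0)) (nhds 1) := by
      have hc : ContinuousAt Gamma (1:ℝ) := (Real.differentiableAt_Gamma hne1).continuousAt
      have hb : Tendsto (fun t : ℝ => t+1) (nhdsWithin (0:ℝ) (Set.Ioi 0)) (nhds 1) := by
        have h : Tendsto (fun t : ℝ => t + 1) (nhds (0:ℝ)) (nhds (0 + 1)) :=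
          (continuous_id.add continuous_const).tendsto _
        rw [zero_add] at h
        exact h.mono_left nhdsWithin_le_nhds
      have := hc.tendsto.comp hb
      simp only [Function.comp_def] at this
      rwa [Real.Gamma_one] at this
    have hB : Tendsto (fun t : ℝ => t⁻¹) (nhdsWithin (0:ℝ) (Set.Ioi 0)) atTop :=
      tendsto_inv_nhdsGT_zero
    have hprod : Tendsto (fun t : ℝ => Gamma (t+1) * t⁻¹) (nhdsWithin (0:ℝ) (Set.Ioi 0)) atTop :=
      hA.pos_mul_atTop one_pos hB
    apply hprod.congr'
    filter_upwards [self_mem_nhdsWithin] with t ht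
    simp only [Set.mem_Ioi] at ht
    rw [Real.Gamma_add_one ht.ne', mul_comm t, mul_assoc, mul_inv_cancel₀ ht.ne', mul_one]
  have h2 : Tendsto (fun x : ℝ => Gamma (x+1/2)) (nhdsWithin (-(1/2)) (Set.Ioi (-(1/2):ℝ)))
      atTop := hGat.comp hhalf
  have hdiv : Tendsto (fun x : ℝ => Gamma (x+1)/Gamma (x+1/2))
      (nhdsWithin (-(1/2)) (Set.Ioi (-(1/2):ℝ))) (nhds 0) := h1.div_atTop h2
  have hsq := hdiv.pow 2
  have hid : Tendsto (fun x : ℝ => x) (nhdsWithin (-(1/2)) (Set.Ioi (-(1/2):ℝ)))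
      (nhds (-(1/2))) := (continuous_id.tendsto _).mono_left nhdsWithin_le_nhds
  have hfin := hsq.sub hid
  rw [show ((0:ℝ)^2 - -(1/2)) = 1/2 by norm_num] at hfin
  exact hfin

theorem watson_monotonicity :
    StrictAntiOn (fun x : ℝ => (Gamma (x + 1) / Gamma (x + 1 / 2)) ^ 2 - x)
        (Set.Ioi (-(1 / 2) : ℝ)) ∧
      Tendsto (fun x : ℝ => (Gamma (x + 1) / Gamma (x + 1 / 2)) ^ 2 - x) atTop
        (nhds (1 / 4)) ∧
      Tendsto (fun x : ℝ => (Gamma (x + 1) / Gamma (x + 1 / 2)) ^ 2 - x)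
        (nhdsWithin (-(1 / 2)) (Set.Ioi (-(1 / 2) : ℝ))) (nhds (1 / 2)) ∧
      ∀ x : ℝ, -(1 / 2) < x →
        1 / 4 < (Gamma (x + 1) / Gamma (x + 1 / 2)) ^ 2 - x ∧
          (Gamma (x + 1) / Gamma (x + 1 / 2)) ^ 2 - x < 1 / 2 := by
  have hrate : ∀ x y : ℝ, -(1/2) < x → x < y → th y < th x := by
    intro x y hx hxy
    have h := th_rate (y - x) hx (by linarith)
    rw [show x + (y - x) = y by ring] at h
    have hgap : 1/(64*y+48) < 1/(64*x+48) := by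
      apply one_div_lt_one_div_of_lt
      · linarith
      · linarith
    unfold th at h ⊢
    linarith
  refine ⟨?_, th_atTop, th_bdry, ?_⟩
  · intro x hx y hy hxy
    simp only [Set.mem_Ioi] at hx hy
    exact hrate x y hx hxy
  · intro x hx
    constructor
    · have h := th_envL (x := x) hx
      have : 0 < 1/(64*x+48) := by
        apply div_pos (by norm_num) (by linarith)
      unfold th at h
      linarith
    · have hmid : -(1/2) < x/2 - 1/4 := by linarith
      have h1 := hrate (x/2 - 1/4) x hmid (by linarith)
      have h2 := th_le_half hmid
      unfold th at h1 h2
      linarith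
end

section
/- For every real number x ≥ -1/4, the double inequality √(x + 1/4) < Γ(x+1)/Γ(x+1/2) ≤ √(x + 1/4 + (Γ(3/4)/Γ(1/4))²) holds, where Γ denotes Euler's gamma function. -/
set_option maxHeartbeats 1000000


open Real

noncomputable def wgr (x : ℝ) : ℝ := Gamma (x + 1) / Gamma (x + 1 / 2)

noncomputable def wpsi (x : ℝ) : ℝ := wgr x ^ 2 - x - 1 / 4

lemma wgr_pos {x : ℝ} (hx : -(1 / 4 : ℝ) ≤ x) : 0 < wgr x :=
  div_pos (Gamma_pos_of_pos (by linarith)) (Gamma_pos_of_pos (by linarith))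

lemma gamma_midpoint {a : ℝ} (ha : 0 < a) :
    Gamma (a + 1 / 2) ^ 2 ≤ Gamma a * Gamma (a + 1) := by
  have h := Real.Gamma_mul_add_mul_le_rpow_Gamma_mul_rpow_Gamma ha
    (by linarith : (0:ℝ) < a + 1) (by norm_num : (0:ℝ) < 1/2)
    (by norm_num : (0:ℝ) < 1/2) (by norm_num)
  have e : (1/2 : ℝ) * a + (1/2 : ℝ) * (a + 1) = a + 1/2 := by ring
  rw [e] at h
  have h2 : Gamma (a + 1/2) ^ 2 ≤ (Gamma a ^ (1/2:ℝ) * Gamma (a+1) ^ (1/2:ℝ)) ^ 2 := by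
    have hpos : 0 < Gamma (a + 1/2) := Gamma_pos_of_pos (by linarith)
    exact pow_le_pow_left₀ hpos.le h 2
  calc Gamma (a + 1/2) ^ 2 ≤ (Gamma a ^ (1/2:ℝ) * Gamma (a+1) ^ (1/2:ℝ)) ^ 2 := h2
    _ = Gamma a * Gamma (a + 1) := by
        rw [mul_pow, ← rpow_natCast (Gamma a ^ (1/2:ℝ)) 2,
          ← rpow_natCast (Gamma (a+1) ^ (1/2:ℝ)) 2,
          ← rpow_mul (Gamma_pos_of_pos ha).le,
          ← rpow_mul (Gamma_pos_of_pos (by linarith : (0:ℝ) < a+1)).le]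
        norm_num

lemma wgr_sq_lb {y : ℝ} (hy : 0 < y) : y ≤ wgr y ^ 2 := by
  have hmid := gamma_midpoint hy
  have hrec : Gamma (y + 1) = y * Gamma y := Gamma_add_one hy.ne'
  have hg1 : 0 < Gamma (y + 1 / 2) := Gamma_pos_of_pos (by linarith)
  have hg2 : 0 < Gamma (y + 1) := Gamma_pos_of_pos (by linarith)
  have hgy : 0 < Gamma y := Gamma_pos_of_pos hy
  unfold wgr
  rw [div_pow, le_div_iff₀ (by positivity)]
  nlinarith

lemma wgr_sq_ub {y : ℝ} (hy : -(1/2:ℝ) < y) : wgr y ^ 2 ≤ y + 1 / 2 := by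
  have ha : (0:ℝ) < y + 1/2 := by linarith
  have hmid := gamma_midpoint ha
  have e1 : y + 1/2 + 1/2 = y + 1 := by ring
  rw [e1] at hmid
  have hrec : Gamma (y + 1/2 + 1) = (y + 1/2) * Gamma (y + 1/2) := Gamma_add_one ha.ne'
  rw [hrec] at hmid
  have hg1 : 0 < Gamma (y + 1 / 2) := Gamma_pos_of_pos ha
  unfold wgr
  rw [div_pow, div_le_iff₀ (by positivity)]
  nlinarith

lemma psi_le_quarter {y : ℝ} (hy : -(1/4:ℝ) ≤ y) : wpsi y ≤ 1 / 4 := by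
  have := wgr_sq_ub (show -(1/2:ℝ) < y by linarith)
  unfold wpsi; linarith

lemma wgr_rec {x : ℝ} (hx : -(1 / 4 : ℝ) ≤ x) :
    wgr (x + 1) * (x + 1 / 2) = wgr x * (x + 1) := by
  have h1 : (0:ℝ) < x + 1 := by linarith
  have h2 : (0:ℝ) < x + 1 / 2 := by linarith
  have hg : Gamma (x + 1 / 2) ≠ 0 := (Gamma_pos_of_pos h2).ne'
  have hrec1 : Gamma (x + 1 + 1) = (x + 1) * Gamma (x + 1) := Gamma_add_one h1.ne'
  have hrec2 : Gamma (x + 1 + 1 / 2) = (x + 1 / 2) * Gamma (x + 1 / 2) := by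
    have e : x + 1 + 1 / 2 = x + 1 / 2 + 1 := by ring
    rw [e, Gamma_add_one h2.ne']
  unfold wgr
  rw [hrec1, hrec2, div_mul_eq_mul_div, div_mul_eq_mul_div,
    div_eq_div_iff (by positivity) hg]
  ring

lemma wgr_sq_rec {x : ℝ} (hx : -(1 / 4 : ℝ) ≤ x) :
    wgr (x + 1) ^ 2 * (x + 1 / 2) ^ 2 = wgr x ^ 2 * (x + 1) ^ 2 := by
  have h := wgr_rec hx
  linear_combination (wgr (x + 1) * (x + 1 / 2) + wgr x * (x + 1)) * h

lemma wgr_sq_down {x : ℝ} (hx : -(1 / 4 : ℝ) ≤ x) :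
    ((x + 1 / 2) / (x + 1)) ^ 2 * wgr (x + 1) ^ 2 = wgr x ^ 2 := by
  have h1 : (x + 1 : ℝ) ≠ 0 := by intro h; nlinarith [hx]
  rw [div_pow, div_mul_eq_mul_div, div_eq_iff (pow_ne_zero 2 h1)]
  linear_combination wgr_sq_rec hx

lemma wpsi_step {x : ℝ} (hx : -(1 / 4 : ℝ) ≤ x) :
    wpsi x = 1 / (16 * (x + 1) ^ 2) + ((x + 1 / 2) / (x + 1)) ^ 2 * wpsi (x + 1) := by
  have h1 : (x + 1 : ℝ) ≠ 0 := by intro h; nlinarith [hx]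
  have h2 : (x + 1 / 2 : ℝ) ≠ 0 := by intro h; nlinarith [hx]
  have hsq := wgr_sq_rec hx
  unfold wpsi
  field_simp
  linear_combination (-256) * hsq

lemma psi_ge_neg_quarter {x : ℝ} (hx : -(1 / 4 : ℝ) ≤ x) : -(1/4 : ℝ) ≤ wpsi x := by
  rcases lt_or_ge 0 x with h | h
  · have := wgr_sq_lb h
    unfold wpsi; linarith
  · have hstep := wpsi_step hx
    have h1 : (0:ℝ) < x + 1 := by linarith
    have hq0 : (0:ℝ) ≤ ((x + 1 / 2) / (x + 1)) ^ 2 := sq_nonneg _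
    have hq1 : ((x + 1 / 2) / (x + 1)) ^ 2 ≤ 1 := by
      rw [div_pow, div_le_one (by positivity)]
      nlinarith
    have hpsi1 : -(1/4:ℝ) ≤ wpsi (x + 1) := by
      have := wgr_sq_lb (show (0:ℝ) < x + 1 by linarith)
      unfold wpsi; linarith
    have hT : (0:ℝ) < 1 / (16 * (x + 1) ^ 2) := by positivity
    nlinarith [mul_le_mul_of_nonneg_left hpsi1 hq0]

/-- tail-limit helper -/
lemma le_of_forall_tail {a b K : ℝ} (x : ℝ) (hK : 0 ≤ K)
    (h : ∀ n : ℕ, 1 ≤ x + n → a ≤ b + K / (x + n)) : a ≤ b := by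
  refine le_of_forall_pos_le_add fun ε hε => ?_
  obtain ⟨n, hn⟩ := exists_nat_gt (max (1 - x) (K / ε - x))
  have hx1 : 1 ≤ x + n := by
    have := le_max_left (1 - x) (K / ε - x)
    linarith [lt_of_le_of_lt this hn]
  have h2 : K / (x + n) ≤ ε := by
    have hlt : K / ε - x < n := lt_of_le_of_lt (le_max_right _ _) hn
    have hxn : (0:ℝ) < x + n := by linarith
    rw [div_le_iff₀ hxn]
    have : K / ε < x + n := by linarith
    rw [div_lt_iff₀ hε] at this
    nlinarith
  linarith [h n hx1]

lemma wgr_cast_succ (x : ℝ) (n : ℕ) : x + ((n + 1 : ℕ) : ℝ) = (x + 1) + (n : ℝ) := by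
  push_cast; ring

lemma wpsi_le_aux : ∀ n : ℕ, ∀ x : ℝ, -(1 / 4 : ℝ) ≤ x →
    wpsi x ≤ 1 / (16 * (x + 1 / 2)) + (wgr x ^ 2 / wgr (x + (n : ℝ)) ^ 2) / 4 := by
  intro n
  induction n with
  | zero =>
    intro x hx
    have hU : (0:ℝ) < 1 / (16 * (x + 1 / 2)) := by
      have : (0:ℝ) < x + 1/2 := by linarith
      positivity
    have hgr := wgr_pos hx
    simp only [Nat.cast_zero, add_zero]
    rw [div_self (by positivity : wgr x ^ 2 ≠ 0)]
    linarith [psi_le_quarter hx]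
  | succ n ih =>
    intro x hx
    have hx1 : -(1 / 4 : ℝ) ≤ x + 1 := by linarith
    have hstep := wpsi_step hx
    have hih := ih (x + 1) hx1
    have hq : (0:ℝ) < ((x + 1 / 2) / (x + 1)) ^ 2 := by
      have h1 : (0:ℝ) < x + 1 := by linarith
      have h2 : (0:ℝ) < x + 1/2 := by linarith
      positivity
    have hmul := mul_le_mul_of_nonneg_left hih hq.le
    -- self-improving inequality
    have hself : 1 / (16 * (x + 1) ^ 2)
        + ((x + 1 / 2) / (x + 1)) ^ 2 * (1 / (16 * (x + 1 + 1 / 2)))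
        ≤ 1 / (16 * (x + 1 / 2)) := by
      have h1 : (0:ℝ) < x + 1 := by linarith
      have h2 : (0:ℝ) < x + 1/2 := by linarith
      have h3 : (0:ℝ) < x + 3/2 := by linarith
      rw [div_pow, div_mul_div_comm, mul_one,
        div_add_div _ _ (by positivity : (16 * (x+1)^2 : ℝ) ≠ 0)
          (by positivity : ((x+1)^2 * (16 * (x + 1 + 1/2)) : ℝ) ≠ 0),
        div_le_div_iff₀ (by positivity) (by positivity)]
      nlinarith [sq_nonneg (x + 5/8), mul_pos h1 h2, mul_pos (mul_pos h1 h1) h2,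
        mul_pos (mul_pos h1 h1) (mul_pos h1 h2), sq_nonneg (x+1/2), mul_pos h1 h1]
    -- identity for the tail term
    have htail : ((x + 1 / 2) / (x + 1)) ^ 2 * (wgr (x+1) ^ 2 / wgr ((x+1) + (n:ℝ)) ^ 2 / 4)
        = wgr x ^ 2 / wgr ((x+1) + (n:ℝ)) ^ 2 / 4 := by
      rw [div_div, div_div, ← mul_div_assoc, wgr_sq_down hx]
    rw [wgr_cast_succ]
    calc wpsi x = 1 / (16 * (x + 1) ^ 2) + ((x + 1 / 2) / (x + 1)) ^ 2 * wpsi (x + 1) := hstep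
      _ ≤ 1 / (16 * (x + 1) ^ 2) + ((x + 1 / 2) / (x + 1)) ^ 2 *
            (1 / (16 * (x + 1 + 1 / 2)) + wgr (x + 1) ^ 2 / wgr (x + 1 + (n:ℝ)) ^ 2 / 4) := by
          gcongr
      _ = (1 / (16 * (x + 1) ^ 2) + ((x + 1 / 2) / (x + 1)) ^ 2 * (1 / (16 * (x + 1 + 1 / 2))))
            + ((x + 1 / 2) / (x + 1)) ^ 2 * (wgr (x + 1) ^ 2 / wgr (x + 1 + (n:ℝ)) ^ 2 / 4) := by
          ring
      _ ≤ 1 / (16 * (x + 1 / 2)) + wgr x ^ 2 / wgr (x + 1 + (n:ℝ)) ^ 2 / 4 := by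
          rw [htail]
          linarith [hself]

lemma wpsi_le_U {x : ℝ} (hx : -(1 / 4 : ℝ) ≤ x) : wpsi x ≤ 1 / (16 * (x + 1 / 2)) := by
  have hgr := wgr_pos hx
  apply le_of_forall_tail (K := wgr x ^ 2 / 4) x (by positivity)
  intro n hn
  have h := wpsi_le_aux n x hx
  have hpos : (0:ℝ) < x + n := by linarith
  have hlb := wgr_sq_lb hpos
  have hmono : wgr x ^ 2 / wgr (x + (n:ℝ)) ^ 2 / 4 ≤ wgr x ^ 2 / 4 / (x + n) := by
    rw [div_right_comm]
    exact div_le_div_of_nonneg_left (by positivity) (by linarith) hlb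
  linarith

lemma wpsi_ge_aux : ∀ n : ℕ, ∀ x : ℝ, -(1 / 4 : ℝ) ≤ x →
    1 / (16 * (x + 1) ^ 2) - (wgr x ^ 2 / wgr (x + (n : ℝ)) ^ 2) / 2 ≤ wpsi x := by
  intro n
  induction n with
  | zero =>
    intro x hx
    have hgr := wgr_pos hx
    simp only [Nat.cast_zero, add_zero]
    rw [div_self (by positivity : wgr x ^ 2 ≠ 0)]
    have hT : 1 / (16 * (x + 1) ^ 2) ≤ 1/9 := by
      have h1 : (0:ℝ) < x + 1 := by linarith
      rw [div_le_div_iff₀ (by positivity) (by norm_num)]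
      nlinarith
    linarith [psi_ge_neg_quarter hx]
  | succ n ih =>
    intro x hx
    have hx1 : -(1 / 4 : ℝ) ≤ x + 1 := by linarith
    have hstep := wpsi_step hx
    have hq : (0:ℝ) < ((x + 1 / 2) / (x + 1)) ^ 2 := by
      have h1 : (0:ℝ) < x + 1 := by linarith
      have h2 : (0:ℝ) < x + 1/2 := by linarith
      positivity
    have htail : ((x + 1 / 2) / (x + 1)) ^ 2 * (wgr (x+1) ^ 2 / wgr ((x+1) + (n:ℝ)) ^ 2 / 2)
        = wgr x ^ 2 / wgr ((x+1) + (n:ℝ)) ^ 2 / 2 := by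
      rw [div_div, div_div, ← mul_div_assoc, wgr_sq_down hx]
    rw [wgr_cast_succ]
    have hge : ((x + 1 / 2) / (x + 1)) ^ 2 *
          (1 / (16 * (x + 1 + 1) ^ 2) - wgr (x + 1) ^ 2 / wgr (x + 1 + (n:ℝ)) ^ 2 / 2)
        ≤ ((x + 1 / 2) / (x + 1)) ^ 2 * wpsi (x + 1) :=
      mul_le_mul_of_nonneg_left (ih (x+1) hx1) hq.le
    have hqT : 0 ≤ ((x + 1 / 2) / (x + 1)) ^ 2 * (1 / (16 * (x + 1 + 1) ^ 2)) := by positivity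
    calc 1 / (16 * (x + 1) ^ 2) - wgr x ^ 2 / wgr (x + 1 + (n:ℝ)) ^ 2 / 2
        = 1 / (16 * (x + 1) ^ 2)
          - ((x + 1 / 2) / (x + 1)) ^ 2 * (wgr (x+1) ^ 2 / wgr ((x+1) + (n:ℝ)) ^ 2 / 2) := by
          rw [htail]
      _ ≤ 1 / (16 * (x + 1) ^ 2) + ((x + 1 / 2) / (x + 1)) ^ 2 *
            (1 / (16 * (x + 1 + 1) ^ 2) - wgr (x + 1) ^ 2 / wgr (x + 1 + (n:ℝ)) ^ 2 / 2) := by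
          have expand : ((x + 1 / 2) / (x + 1)) ^ 2 *
              (1 / (16 * (x + 1 + 1) ^ 2) - wgr (x + 1) ^ 2 / wgr (x + 1 + (n:ℝ)) ^ 2 / 2)
              = ((x + 1 / 2) / (x + 1)) ^ 2 * (1 / (16 * (x + 1 + 1) ^ 2))
              - ((x + 1 / 2) / (x + 1)) ^ 2 * (wgr (x + 1) ^ 2 / wgr (x + 1 + (n:ℝ)) ^ 2 / 2) := by
            ring
          rw [expand]
          linarith [hqT]
      _ ≤ 1 / (16 * (x + 1) ^ 2) + ((x + 1 / 2) / (x + 1)) ^ 2 * wpsi (x + 1) := by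
          linarith [hge]
      _ = wpsi x := hstep.symm

lemma wpsi_ge_T0 {x : ℝ} (hx : -(1 / 4 : ℝ) ≤ x) : 1 / (16 * (x + 1) ^ 2) ≤ wpsi x := by
  have hgr := wgr_pos hx
  apply le_of_forall_tail (K := wgr x ^ 2 / 2) x (by positivity)
  intro n hn
  have h := wpsi_ge_aux n x hx
  have hpos : (0:ℝ) < x + n := by linarith
  have hlb := wgr_sq_lb hpos
  have hmono : wgr x ^ 2 / wgr (x + (n:ℝ)) ^ 2 / 2 ≤ wgr x ^ 2 / 2 / (x + n) := by
    rw [div_right_comm]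
    exact div_le_div_of_nonneg_left (by positivity) (by linarith) hlb
  linarith

lemma wpsi_pos {x : ℝ} (hx : -(1 / 4 : ℝ) ≤ x) : 0 < wpsi x := by
  have h := wpsi_ge_T0 hx
  have h1 : (0:ℝ) < x + 1 := by linarith
  have : (0:ℝ) < 1 / (16 * (x + 1) ^ 2) := by positivity
  linarith

lemma wpsi_lip_aux : ∀ n : ℕ, ∀ y : ℝ, (3/4:ℝ) ≤ y → ∀ h : ℝ, 0 ≤ h → h ≤ 1 →
    wpsi (y + h) - wpsi y ≤ h / (16 * (y + 1/2) ^ 2)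
      + (wgr y ^ 2 / wgr (y + (n : ℝ)) ^ 2) / 4 := by
  intro n
  induction n with
  | zero =>
    intro y hy h h0 h1
    have hy4 : -(1/4:ℝ) ≤ y := by linarith
    have hyh4 : -(1/4:ℝ) ≤ y + h := by linarith
    have hgr := wgr_pos hy4
    simp only [Nat.cast_zero, add_zero]
    rw [div_self (by positivity : wgr y ^ 2 ≠ 0)]
    have hub : wpsi (y + h) ≤ 1 / (16 * (y + h + 1/2)) := wpsi_le_U hyh4
    have hub2 : 1 / (16 * (y + h + 1/2)) ≤ 1/4 := by
      rw [div_le_div_iff₀ (by positivity) (by norm_num)]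
      linarith
    have hpos := wpsi_pos hy4
    have hD : 0 ≤ h / (16 * (y + 1/2) ^ 2) := by positivity
    linarith
  | succ n ih =>
    intro y hy h h0 h1
    have hy4 : -(1/4:ℝ) ≤ y := by linarith
    have hyh4 : -(1/4:ℝ) ≤ y + h := by linarith
    have hy14 : -(1/4:ℝ) ≤ y + 1 := by linarith
    have hy1 : (3/4:ℝ) ≤ y + 1 := by linarith
    have hstepA := wpsi_step hyh4
    have hstepB := wpsi_step hy4
    have eArg : y + h + 1 = y + 1 + h := by ring
    rw [eArg] at hstepA
    have hIH := ih (y + 1) hy1 h h0 h1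
    -- T0 monotonicity
    have hb1 : 1 / (16 * (y + 1 + h) ^ 2) ≤ 1 / (16 * (y + 1) ^ 2) := by
      rw [div_le_div_iff₀ (by positivity) (by positivity)]
      nlinarith
    -- q bounds
    have hq_lb : ((y + 1/2) / (y + 1)) ^ 2 ≤ ((y + h + 1/2) / (y + 1 + h)) ^ 2 := by
      rw [div_pow, div_pow, div_le_div_iff₀ (by positivity) (by positivity)]
      nlinarith [mul_nonneg (mul_nonneg h0 (by linarith : (0:ℝ) ≤ y + 1/2)) (by linarith : (0:ℝ) ≤ y + 1),
        mul_nonneg h0 (mul_nonneg (by linarith : (0:ℝ) ≤ y + 1/2) (by linarith : (0:ℝ) ≤ y + 1))]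
    have hq_ub : ((y + h + 1/2) / (y + 1 + h)) ^ 2 - ((y + 1/2) / (y + 1)) ^ 2
        ≤ h * (y + 1/2) / (y + 1) ^ 3 := by
      rw [div_pow, div_pow, div_sub_div _ _ (by positivity) (by positivity),
        div_le_div_iff₀ (by positivity) (by positivity)]
      linarith [mul_nonneg (mul_nonneg h0 h0) (pow_nonneg (by linarith : (0:ℝ) ≤ y - 3/4) 4),
        mul_nonneg (mul_nonneg h0 h0) (pow_nonneg (by linarith : (0:ℝ) ≤ y - 3/4) 3),
        mul_nonneg (mul_nonneg (mul_nonneg h0 h0) h0) (pow_nonneg (by linarith : (0:ℝ) ≤ y - 3/4) 3),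
        mul_nonneg (mul_nonneg h0 h0) (pow_nonneg (by linarith : (0:ℝ) ≤ y - 3/4) 2),
        mul_nonneg (mul_nonneg (mul_nonneg h0 h0) h0) (pow_nonneg (by linarith : (0:ℝ) ≤ y - 3/4) 2),
        mul_nonneg (mul_nonneg h0 h0) (by linarith : (0:ℝ) ≤ y - 3/4),
        mul_nonneg (mul_nonneg (mul_nonneg h0 h0) h0) (by linarith : (0:ℝ) ≤ y - 3/4),
        mul_nonneg h0 h0, mul_nonneg (mul_nonneg h0 h0) h0]
    -- psi bounds at (y+1)+h
    have hpsiA_pos := wpsi_pos (show -(1/4:ℝ) ≤ y + 1 + h by linarith)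
    have hpsiA_ub : wpsi (y + 1 + h) ≤ 1 / (16 * (y + 1 + 1/2)) := by
      have := wpsi_le_U (show -(1/4:ℝ) ≤ y + 1 + h by linarith)
      have h2 : 1 / (16 * (y + 1 + h + 1/2)) ≤ 1 / (16 * (y + 1 + 1/2)) := by
        rw [div_le_div_iff₀ (by positivity) (by positivity)]
        linarith
      linarith
    have hqy_lb : (0:ℝ) ≤ ((y + 1/2) / (y + 1)) ^ 2 := by positivity
    -- D condition
    have hdcond : (y + 1/2) / (y + 1) ^ 3 * (1 / (16 * (y + 1 + 1/2)))
        + ((y + 1/2) / (y + 1)) ^ 2 * (1 / (16 * (y + 1 + 1/2) ^ 2))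
        ≤ 1 / (16 * (y + 1/2) ^ 2) := by
      rw [div_pow, div_mul_div_comm, div_mul_div_comm, mul_one, mul_one,
        div_add_div _ _ (by positivity) (by positivity),
        div_le_div_iff₀ (by positivity) (by positivity)]
      linarith [pow_nonneg (by linarith : (0:ℝ) ≤ y - 3/4) 8,
        pow_nonneg (by linarith : (0:ℝ) ≤ y - 3/4) 7,
        pow_nonneg (by linarith : (0:ℝ) ≤ y - 3/4) 6,
        pow_nonneg (by linarith : (0:ℝ) ≤ y - 3/4) 5,
        pow_nonneg (by linarith : (0:ℝ) ≤ y - 3/4) 4,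
        pow_nonneg (by linarith : (0:ℝ) ≤ y - 3/4) 3,
        pow_nonneg (by linarith : (0:ℝ) ≤ y - 3/4) 2,
        (by linarith : (0:ℝ) ≤ y - 3/4)]
    -- tail identity
    have htail : ((y + 1/2) / (y + 1)) ^ 2 * (wgr (y+1) ^ 2 / wgr ((y+1) + (n:ℝ)) ^ 2 / 4)
        = wgr y ^ 2 / wgr ((y+1) + (n:ℝ)) ^ 2 / 4 := by
      rw [div_div, div_div, ← mul_div_assoc, wgr_sq_down hy4]
    -- products
    have hprod1 : (((y + h + 1/2) / (y + 1 + h)) ^ 2 - ((y + 1/2) / (y + 1)) ^ 2)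
          * wpsi (y + 1 + h)
        ≤ (h * (y + 1/2) / (y + 1) ^ 3) * (1 / (16 * (y + 1 + 1/2))) := by
      apply mul_le_mul hq_ub hpsiA_ub hpsiA_pos.le
      positivity
    have hprod2 : ((y + 1/2) / (y + 1)) ^ 2 * (wpsi (y + 1 + h) - wpsi (y + 1))
        ≤ ((y + 1/2) / (y + 1)) ^ 2 * (h / (16 * (y + 1 + 1/2) ^ 2)
            + (wgr (y+1) ^ 2 / wgr ((y+1) + (n:ℝ)) ^ 2) / 4) :=
      mul_le_mul_of_nonneg_left hIH hqy_lb
    have hprod3 : h * ((y + 1/2) / (y + 1) ^ 3 * (1 / (16 * (y + 1 + 1/2)))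
          + ((y + 1/2) / (y + 1)) ^ 2 * (1 / (16 * (y + 1 + 1/2) ^ 2)))
        ≤ h * (1 / (16 * (y + 1/2) ^ 2)) :=
      mul_le_mul_of_nonneg_left hdcond h0
    rw [wgr_cast_succ]
    have key : wpsi (y + h) - wpsi y
        = (1 / (16 * (y + 1 + h) ^ 2) - 1 / (16 * (y + 1) ^ 2))
          + (((y + h + 1/2) / (y + 1 + h)) ^ 2 - ((y + 1/2) / (y + 1)) ^ 2) * wpsi (y + 1 + h)
          + ((y + 1/2) / (y + 1)) ^ 2 * (wpsi (y + 1 + h) - wpsi (y + 1)) := by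
      rw [hstepA, hstepB]; ring
    have expand2 : ((y + 1/2) / (y + 1)) ^ 2 * (h / (16 * (y + 1 + 1/2) ^ 2)
          + (wgr (y+1) ^ 2 / wgr ((y+1) + (n:ℝ)) ^ 2) / 4)
        = h * (((y + 1/2) / (y + 1)) ^ 2 * (1 / (16 * (y + 1 + 1/2) ^ 2)))
          + ((y + 1/2) / (y + 1)) ^ 2 * (wgr (y+1) ^ 2 / wgr ((y+1) + (n:ℝ)) ^ 2 / 4) := by
      ring
    have expand3 : h * (y + 1/2) / (y + 1) ^ 3 * (1 / (16 * (y + 1 + 1/2)))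
        = h * ((y + 1/2) / (y + 1) ^ 3 * (1 / (16 * (y + 1 + 1/2)))) := by ring
    rw [expand2] at hprod2
    rw [expand3] at hprod1
    have hprod3' : h * ((y + 1/2) / (y + 1) ^ 3 * (1 / (16 * (y + 1 + 1/2))))
          + h * (((y + 1/2) / (y + 1)) ^ 2 * (1 / (16 * (y + 1 + 1/2) ^ 2)))
        ≤ h / (16 * (y + 1/2) ^ 2) := by
      have e : h * (1 / (16 * (y + 1/2) ^ 2)) = h / (16 * (y + 1/2) ^ 2) := by ring
      rw [← e]
      calc h * ((y + 1/2) / (y + 1) ^ 3 * (1 / (16 * (y + 1 + 1/2))))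
            + h * (((y + 1/2) / (y + 1)) ^ 2 * (1 / (16 * (y + 1 + 1/2) ^ 2)))
          = h * ((y + 1/2) / (y + 1) ^ 3 * (1 / (16 * (y + 1 + 1/2)))
            + ((y + 1/2) / (y + 1)) ^ 2 * (1 / (16 * (y + 1 + 1/2) ^ 2))) := by ring
        _ ≤ h * (1 / (16 * (y + 1/2) ^ 2)) := mul_le_mul_of_nonneg_left hdcond h0
    linarith [key, hb1, hprod1, hprod2, hprod3', htail]

lemma wpsi_lip {y h : ℝ} (hy : (3/4:ℝ) ≤ y) (h0 : 0 ≤ h) (h1 : h ≤ 1) :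
    wpsi (y + h) - wpsi y ≤ h / (16 * (y + 1/2) ^ 2) := by
  have hy4 : -(1/4:ℝ) ≤ y := by linarith
  have hgr := wgr_pos hy4
  apply le_of_forall_tail (K := wgr y ^ 2 / 4) y (by positivity)
  intro n hn
  have hb := wpsi_lip_aux n y hy h h0 h1
  have hpos : (0:ℝ) < y + n := by linarith
  have hlb := wgr_sq_lb hpos
  have hmono : wgr y ^ 2 / wgr (y + (n:ℝ)) ^ 2 / 4 ≤ wgr y ^ 2 / 4 / (y + n) := by
    rw [div_right_comm]
    exact div_le_div_of_nonneg_left (by positivity) (by linarith) hlb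
  linarith

lemma wpsi_le_c {x : ℝ} (hx : -(1 / 4 : ℝ) ≤ x) : wpsi x ≤ wpsi (-(1/4)) := by
  have hc_lb : (1/9 : ℝ) ≤ wpsi (-(1/4)) := by
    have h := wpsi_ge_T0 (le_refl (-(1/4:ℝ)))
    norm_num at h
    linarith
  rcases le_or_gt x (3/4) with hcase | hcase
  · -- hard region
    have h0 : (0:ℝ) ≤ x + 1/4 := by linarith
    have h1 : x + 1/4 ≤ 1 := by linarith
    have hstepx := wpsi_step hx
    have hstepc := wpsi_step (le_refl (-(1/4:ℝ)))
    have e1 : (-(1/4:ℝ) + 1) = 3/4 := by norm_num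
    rw [e1] at hstepc
    norm_num at hstepc
    -- hstepc : wpsi (-(1/4)) = 1/9 + (1/9) * wpsi (3/4)  (in some normal form)
    have hΔ : wpsi (x + 1) - wpsi (3/4) ≤ (x + 1/4) / 25 := by
      have hx1e : x + 1 = 3/4 + (x + 1/4) := by ring
      have := wpsi_lip (le_refl (3/4:ℝ)) h0 h1
      rw [← hx1e] at this
      norm_num at this
      linarith
    have hpsix1_pos : 0 < wpsi (x + 1) := wpsi_pos (by linarith)
    have hpsix1_ub : wpsi (x + 1) ≤ 1/20 := by
      have := wpsi_le_U (show -(1/4:ℝ) ≤ x + 1 by linarith)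
      have h2 : 1 / (16 * (x + 1 + 1/2)) ≤ 1/20 := by
        rw [div_le_div_iff₀ (by nlinarith : (0:ℝ) < 16 * (x + 1 + 1/2)) (by norm_num)]
        linarith
      linarith
    have hx1pos : (0:ℝ) < x + 1 := by linarith
    have hq_ub : ((x + 1/2) / (x + 1)) ^ 2 ≤ 1/9 + 16 * (x + 1/4) / 27 := by
      rw [div_pow, div_le_iff₀ (pow_pos hx1pos 2)]
      nlinarith [mul_nonneg (mul_nonneg h0 h0) h0]
    have hq_lb : (1/9 : ℝ) ≤ ((x + 1/2) / (x + 1)) ^ 2 := by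
      rw [div_pow, le_div_iff₀ (pow_pos hx1pos 2)]
      nlinarith [mul_nonneg h0 (by linarith : (0:ℝ) ≤ 8*x + 5)]
    have hp1 : (((x + 1/2) / (x + 1)) ^ 2 - 1/9) * wpsi (x + 1)
        ≤ (16 * (x + 1/4) / 27) * (1/20) := by
      apply mul_le_mul (by linarith) hpsix1_ub hpsix1_pos.le
      linarith
    have hT0 : 1 / (16 * (x + 1) ^ 2) ≤ 1/9 - (23/675) * (x + 1/4) := by
      rw [div_le_iff₀ (by positivity : (0:ℝ) < 16 * (x + 1) ^ 2)]
      nlinarith [mul_nonneg h0 h0, mul_nonneg (mul_nonneg h0 h0) h0,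
        mul_nonneg (mul_nonneg h0 h0) (by linarith : (0:ℝ) ≤ 1 - (x + 1/4))]
    nlinarith [hstepx, hstepc, hp1, hΔ, hT0, hpsix1_pos, hq_lb]
  · -- easy region
    have hU := wpsi_le_U hx
    have h2 : 1 / (16 * (x + 1/2)) ≤ 1/20 := by
      rw [div_le_div_iff₀ (by nlinarith : (0:ℝ) < 16 * (x + 1/2)) (by norm_num)]
      linarith
    linarith

theorem watson_double_inequality (x : ℝ) (hx : -(1 / 4) ≤ x) :
    Real.sqrt (x + 1 / 4) < Gamma (x + 1) / Gamma (x + 1 / 2) ∧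
      Gamma (x + 1) / Gamma (x + 1 / 2) ≤
        Real.sqrt (x + 1 / 4 + (Gamma (3 / 4) / Gamma (1 / 4)) ^ 2) := by
  have hgr : 0 < wgr x := wgr_pos hx
  have hT0 := wpsi_ge_T0 hx
  have hT0pos : (0:ℝ) < 1 / (16 * (x + 1) ^ 2) := by
    have : (0:ℝ) < x + 1 := by linarith
    positivity
  have hc_eq : wpsi (-(1/4)) = (Gamma (3/4) / Gamma (1/4)) ^ 2 := by
    unfold wpsi wgr
    norm_num
  have hle := wpsi_le_c hx
  rw [hc_eq] at hle
  constructor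
  · show Real.sqrt (x + 1 / 4) < wgr x
    rw [Real.sqrt_lt' hgr]
    have : wpsi x = wgr x ^ 2 - x - 1/4 := rfl
    linarith
  · show wgr x ≤ Real.sqrt (x + 1 / 4 + (Gamma (3 / 4) / Gamma (1 / 4)) ^ 2)
    apply Real.le_sqrt_of_sq_le
    have : wpsi x = wgr x ^ 2 - x - 1/4 := rfl
    linarith
end

section
/- For every positive integer n, the double inequality 1/√(π(n + 4/π - 1)) ≤ (2n-1)!!/(2n)!! < 1/√(π(n + 1/4)) holds, and the constants 4/π - 1 and 1/4 are the limiting values of ((2n)!!/((2n-1)!!))²/π - n at n = 1 and n → ∞ respectively. -/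
open Real Filter Topology

noncomputable def bW (n : ℕ) : ℝ := 2 ^ (4 * n) * (n.factorial : ℝ) ^ 4 / ((2 * n).factorial : ℝ) ^ 2

lemma fact_pos' (n : ℕ) : (0:ℝ) < (n.factorial : ℝ) := Nat.cast_pos.mpr n.factorial_pos

lemma bW_pos (n : ℕ) : 0 < bW n := by
  have := fact_pos' n; have := fact_pos' (2*n); unfold bW; positivity

lemma bW_eq (n : ℕ) : bW n = (2 * n + 1) * Real.Wallis.W n := by
  have h := Real.Wallis.W_eq_factorial_ratio n
  have h2 : ((2*n).factorial:ℝ)^2 * (2*n+1) ≠ 0 := by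
    have := fact_pos' (2*n); positivity
  rw [h]; unfold bW; field_simp

lemma bW_le (n : ℕ) : bW n ≤ π * n + π / 2 := by
  have h := Real.Wallis.W_le n
  have h2 : (0:ℝ) ≤ 2 * n + 1 := by positivity
  rw [bW_eq]
  nlinarith [Real.Wallis.W_pos n]

lemma lt_bW (n : ℕ) : π * n < bW n := by
  have h := Real.Wallis.le_W n
  have hn : (0:ℝ) ≤ (n:ℝ) := n.cast_nonneg
  rw [bW_eq]
  have e1 : ((2*n+1):ℝ) * ((2*n+1)/(2*n+2)*(π/2)) = (2*n+1)^2*π/(2*(2*n+2)) := by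
    field_simp
  have key : π * n < (2*(n:ℝ)+1) * ((2*n+1)/(2*n+2)*(π/2)) := by
    rw [e1, lt_div_iff₀ (by positivity)]
    nlinarith [pi_pos]
  calc π * n < (2*(n:ℝ)+1) * ((2*n+1)/(2*n+2)*(π/2)) := key
    _ ≤ (2*n+1) * Real.Wallis.W n := by
        apply mul_le_mul_of_nonneg_left h (by positivity)

lemma bW_succ (n : ℕ) : bW (n+1) = bW n * ((2*n+2)^2 / (2*n+1)^2) := by
  have h1 : (2*(n+1)) = (2*n+1)+1 := by ring
  have h2 : ((2*(n+1)).factorial : ℝ) = (2*n+2) * ((2*n+1) * ((2*n).factorial:ℝ)) := by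
    rw [h1, Nat.factorial_succ, Nat.factorial_succ]; push_cast; ring
  have h3 : ((n+1).factorial : ℝ) = (n+1) * (n.factorial:ℝ) := by
    rw [Nat.factorial_succ]; push_cast; ring
  have f1 := fact_pos' n; have f2 := fact_pos' (2*n)
  unfold bW
  rw [h2, h3]
  have : 4*(n+1) = 4*n+4 := by ring
  rw [this, pow_add]
  field_simp

noncomputable def vW (n : ℕ) : ℝ := (bW n / π - n - 1/4) / bW n

lemma vW_succ (n : ℕ) : vW (n+1) = vW n - 1/(4*(2*n+1)^2 * bW (n+1)) := by
  have hb := bW_pos n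
  have hb1 := bW_pos (n+1)
  have hπ := Real.pi_pos
  have hr : bW (n+1) = bW n * ((2*n+2)^2 / (2*n+1)^2) := bW_succ n
  unfold vW
  rw [hr] at *
  have h21 : ((2:ℝ)*n+1) ≠ 0 := by positivity
  have h22 : ((2:ℝ)*n+2) ≠ 0 := by positivity
  push_cast
  field_simp
  ring

lemma vW_anti : StrictAnti vW := by
  apply strictAnti_nat_of_succ_lt
  intro n
  rw [vW_succ]
  have := bW_pos (n+1)
  have : (0:ℝ) < 1/(4*(2*n+1)^2 * bW (n+1)) := by positivity
  linarith

lemma vW_tendsto : Tendsto vW atTop (𝓝 0) := by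
  have hsq : ∀ n : ℕ, 1 ≤ n → -(1/(n:ℝ)) ≤ vW n ∧ vW n ≤ 1/(n:ℝ) := by
    intro n hn
    have hb := bW_pos n
    have hl := lt_bW n
    have hu := bW_le n
    have hπ3 := Real.pi_gt_three
    have hn1 : (1:ℝ) ≤ (n:ℝ) := by exact_mod_cast hn
    have hbn : (n:ℝ) ≤ bW n := by nlinarith
    have hub : bW n / π - n - 1/4 ≤ 1 := by
      have : bW n / π ≤ (n:ℝ) + 1/2 := by rw [div_le_iff₀ Real.pi_pos]; nlinarith
      linarith
    have hlb : -(1:ℝ) ≤ bW n / π - n - 1/4 := by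
      have : (n:ℝ) ≤ bW n / π := by rw [le_div_iff₀ Real.pi_pos]; nlinarith
      linarith
    constructor
    · rw [neg_le, vW, ← neg_div]
      rw [div_le_div_iff₀ hb (by positivity : (0:ℝ) < n)]
      nlinarith
    · rw [vW, div_le_div_iff₀ hb (by positivity : (0:ℝ) < n)]
      nlinarith
  apply tendsto_of_tendsto_of_tendsto_of_le_of_le'
    (by simpa using (tendsto_one_div_atTop_nhds_zero_nat (𝕜 := ℝ)).neg)
    tendsto_one_div_atTop_nhds_zero_nat
  · filter_upwards [eventually_ge_atTop 1] with n hn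
    simpa [one_div] using (hsq n hn).1
  · filter_upwards [eventually_ge_atTop 1] with n hn using (hsq n hn).2

lemma vW_pos (n : ℕ) : 0 < vW n := by
  have h1 : 0 ≤ vW (n+1) := by
    apply le_of_tendsto vW_tendsto
    filter_upwards [eventually_ge_atTop (n+1)] with m hm using vW_anti.antitone hm
  have := vW_anti (Nat.lt_succ_self n)
  linarith

lemma vW_le (n : ℕ) (hn : 1 ≤ n) : vW n ≤ 1/(32*π*n^2) := by
  have key : ∀ m : ℕ, vW n ≤ vW (n+m) + 1/(32*π) * (1/(n:ℝ)^2 - 1/((n+m:ℕ):ℝ)^2) := by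
    intro m
    induction m with
    | zero => simp
    | succ m ih =>
      have hk : 1 ≤ n + m := le_trans hn (Nat.le_add_right n m)
      set k := n + m with hkdef
      have hk1 : (1:ℝ) ≤ (k:ℝ) := by exact_mod_cast hk
      have hstep := vW_succ k
      have hbk : π * (k:ℝ) + π ≤ bW (k+1) := by
        have := lt_bW (k+1)
        push_cast at this
        linarith
      have hbound : 1/(4*(2*(k:ℝ)+1)^2 * bW (k+1)) ≤
          1/(32*π) * (1/(k:ℝ)^2 - 1/((k:ℝ)+1)^2) := by
        have hπ := Real.pi_pos
        have hbp := bW_pos (k+1)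
        have hkr : (0:ℝ) < (k:ℝ) := by linarith
        have e : 1/(32*π) * (1/(k:ℝ)^2 - 1/((k:ℝ)+1)^2) =
            (2*(k:ℝ)+1) / (32*π*(k:ℝ)^2*((k:ℝ)+1)^2) := by
          field_simp; ring
        rw [e, div_le_div_iff₀ (by positivity) (by positivity)]
        have h8 : 8*(k:ℝ)^2*((k:ℝ)+1) ≤ (2*(k:ℝ)+1)^3 := by nlinarith
        nlinarith [mul_le_mul_of_nonneg_left hbk (by positivity : (0:ℝ) ≤ 4*(2*(k:ℝ)+1)^2),
          mul_le_mul_of_nonneg_right h8 (by positivity : (0:ℝ) ≤ 4*π*((k:ℝ)+1))]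
      have hc : ((k+1:ℕ):ℝ) = (k:ℝ) + 1 := by push_cast; ring
      rw [show n + (m+1) = k + 1 from rfl, hstep, hc]
      linarith
  have hlim : Tendsto (fun m : ℕ => vW (n+m) + 1/(32*π) * (1/(n:ℝ)^2 - 1/((n+m:ℕ):ℝ)^2)) atTop
      (𝓝 (0 + 1/(32*π) * (1/(n:ℝ)^2 - 0))) := by
    apply Tendsto.add
    · have := (Filter.tendsto_add_atTop_iff_nat (f := vW) (l := 𝓝 0) n).2 vW_tendsto
      exact this.congr (by intro m; rw [Nat.add_comm])
    · apply Tendsto.const_mul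
      apply Tendsto.const_sub
      have h1 : Tendsto (fun m : ℕ => ((n+m:ℕ):ℝ)) atTop atTop :=
        tendsto_natCast_atTop_atTop.comp ((tendsto_add_atTop_nat n).congr (fun m => Nat.add_comm m n))
      have h2 : Tendsto (fun m : ℕ => ((n+m:ℕ):ℝ)^2) atTop atTop :=
        (tendsto_pow_atTop (by norm_num : (2:ℕ) ≠ 0)).comp h1
      exact h2.inv_tendsto_atTop.congr (by intro m; simp [one_div])
  have hfin := ge_of_tendsto hlim (Eventually.of_forall key)
  calc vW n ≤ 0 + 1/(32*π) * (1/(n:ℝ)^2 - 0) := hfin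
    _ = 1/(32*π*n^2) := by
        rw [zero_add, sub_zero]
        have : (0:ℝ) < (n:ℝ) := by exact_mod_cast hn
        field_simp

lemma uW_pos (n : ℕ) : π * ((n:ℝ) + 1/4) < bW n := by
  have hv := vW_pos n
  have hb := bW_pos n
  have hπ := Real.pi_pos
  have hx : bW n / π - n - 1/4 = vW n * bW n := by
    unfold vW; field_simp
  have hnum : 0 < bW n / π - n - 1/4 := by
    rw [hx]; exact mul_pos hv hb
  have : (n:ℝ) + 1/4 < bW n / π := by linarith
  calc π * ((n:ℝ) + 1/4) < π * (bW n / π) := by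
        exact mul_lt_mul_of_pos_left this hπ
    _ = bW n := by field_simp

lemma uW_le (n : ℕ) (hn : 1 ≤ n) : bW n / π - n - 1/4 ≤ (2*n+1)/(64*(n:ℝ)^2) := by
  have hv := vW_le n hn
  have hb := bW_pos n
  have hπ := Real.pi_pos
  have hn1 : (1:ℝ) ≤ (n:ℝ) := by exact_mod_cast hn
  have hu : bW n / π - n - 1/4 = vW n * bW n := by
    unfold vW; field_simp
  rw [hu]
  have h1 : vW n * bW n ≤ (1/(32*π*n^2)) * (π*n + π/2) := by
    apply mul_le_mul hv (bW_le n) (bW_pos n).le (by positivity)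
  have h2 : (1/(32*π*(n:ℝ)^2)) * (π*n + π/2) = (2*n+1)/(64*(n:ℝ)^2) := by
    field_simp; ring
  linarith [h1, h2.le, h2.ge]

lemma bW_upper (n : ℕ) (hn : 1 ≤ n) : bW n ≤ π * ((n:ℝ) + 4/π - 1) := by
  have hπ := Real.pi_pos
  have e : π * ((n:ℝ) + 4/π - 1) = π*(n:ℝ) + 4 - π := by field_simp
  rw [e]
  match n, hn with
  | 1, _ =>
    have hb1 : bW 1 = 4 := by unfold bW; norm_num [Nat.factorial]
    rw [hb1]; push_cast; linarith
  | 2, _ =>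
    have hb2 : bW 2 = 64/9 := by unfold bW; norm_num [Nat.factorial]
    rw [hb2]; push_cast
    have := Real.pi_gt_d2
    linarith
  | (m+3), _ =>
    set n' := m + 3 with hn'
    have hn3 : (3:ℝ) ≤ (n':ℝ) := by exact_mod_cast Nat.le_add_left 3 m
    have h1 := uW_le n' (by omega)
    have h2 : (2*(n':ℝ)+1)/(64*(n':ℝ)^2) ≤ 7/576 := by
      rw [div_le_div_iff₀ (by positivity) (by norm_num)]
      nlinarith
    have h3 : (7:ℝ)/576 ≤ 4/π - 5/4 := by
      have h4 : (4:ℝ)/3.15 ≤ 4/π := by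
        apply div_le_div_of_nonneg_left (by norm_num) hπ Real.pi_lt_d2.le
      have : (7:ℝ)/576 ≤ 4/3.15 - 5/4 := by norm_num
      linarith
    have h5 : bW n' / π - n' - 1/4 ≤ 4/π - 5/4 := by linarith
    have h6 : bW n' / π ≤ (n':ℝ) + 4/π - 1 := by linarith
    have := (div_le_iff₀ hπ).1 h6
    calc bW n' ≤ ((n':ℝ) + 4/π - 1) * π := this
      _ = π*(n':ℝ) + 4 - π := by field_simp

/-- For a positive integer `n`, with `(2n)!! = 2^n · n!` and `(2n-1)!! = (2n)!/(2^n · n!)`,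
the best-constant Wallis inequality
`1/√(π(n+4/π-1)) ≤ (2n-1)!!/(2n)!! < 1/√(π(n+1/4))`, where `4/π - 1` is the value of
`((2n)!!/(2n-1)!!)²/π - n` at `n = 1` and `1/4` is its limit as `n → ∞`. -/
theorem best_bounds_wallis :
    (∀ n : ℕ, 0 < n →
      1 / Real.sqrt (π * (n + 4 / π - 1)) ≤
          (((2 * n).factorial : ℝ) / ((2 : ℝ) ^ n * n.factorial)) / ((2 : ℝ) ^ n * n.factorial) ∧
        (((2 * n).factorial : ℝ) / ((2 : ℝ) ^ n * n.factorial)) / ((2 : ℝ) ^ n * n.factorial) <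
          1 / Real.sqrt (π * (n + 1 / 4))) ∧
    (fun n : ℕ =>
        (((2 : ℝ) ^ n * n.factorial) / (((2 * n).factorial : ℝ) / ((2 : ℝ) ^ n * n.factorial))) ^ 2
            / π - n) 1 = 4 / π - 1 ∧
    Tendsto
      (fun n : ℕ =>
        (((2 : ℝ) ^ n * n.factorial) / (((2 * n).factorial : ℝ) / ((2 : ℝ) ^ n * n.factorial))) ^ 2
            / π - n) atTop (nhds (1 / 4)) := by
  have hπ := Real.pi_pos
  have hX : ∀ n : ℕ, (((2 : ℝ) ^ n * n.factorial) / (((2 * n).factorial : ℝ) / ((2 : ℝ) ^ n * n.factorial))) ^ 2 = bW n := by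
    intro n
    have h1 := fact_pos' n
    have h2 := fact_pos' (2*n)
    unfold bW
    rw [div_div_eq_mul_div, div_pow]
    congr 1
    ring
  refine ⟨fun n hn => ?_, ?_, ?_⟩
  · have hn1 : (1:ℝ) ≤ (n:ℝ) := by exact_mod_cast hn
    have h1 := fact_pos' n
    have h2 := fact_pos' (2*n)
    set a : ℝ := (((2 * n).factorial : ℝ) / ((2 : ℝ) ^ n * n.factorial)) / ((2 : ℝ) ^ n * n.factorial) with ha
    have hap : 0 < a := by positivity
    have hab : a ^ 2 * bW n = 1 := by
      rw [ha]; unfold bW; field_simp; ring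
    have hsq : Real.sqrt (bW n) = 1 / a := by
      have hb2 : bW n = (1/a)^2 := by
        rw [div_pow, one_pow, eq_div_iff (by positivity)]
        linarith [hab]
      rw [hb2, Real.sqrt_sq (by positivity)]
    have hP : 0 < π * ((n:ℝ) + 4/π - 1) := by
      have e : π * ((n:ℝ) + 4/π - 1) = π*(n:ℝ) + 4 - π := by field_simp
      rw [e]; nlinarith
    constructor
    · have hle : Real.sqrt (bW n) ≤ Real.sqrt (π * ((n:ℝ) + 4/π - 1)) :=
        Real.sqrt_le_sqrt (bW_upper n hn)
      rw [hsq] at hle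
      have := one_div_le_one_div_of_le (by positivity) hle
      rwa [one_div_one_div] at this
    · have hQ : 0 < π * ((n:ℝ) + 1/4) := by positivity
      have hlt : Real.sqrt (π * ((n:ℝ) + 1/4)) < Real.sqrt (bW n) :=
        Real.sqrt_lt_sqrt hQ.le (uW_pos n)
      rw [hsq] at hlt
      have := one_div_lt_one_div_of_lt (Real.sqrt_pos.2 hQ) hlt
      rwa [one_div_one_div] at this
  · simp only []
    norm_num [Nat.factorial]
  · have hEq : ∀ n : ℕ, (((2 : ℝ) ^ n * n.factorial) / (((2 * n).factorial : ℝ) / ((2 : ℝ) ^ n * n.factorial))) ^ 2 / π - n = bW n / π - n := by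
      intro n; rw [hX n]
    apply Tendsto.congr (fun n => (hEq n).symm)
    have hupper : Tendsto (fun n : ℕ => 1/4 + 1/(n:ℝ)) atTop (𝓝 (1/4)) := by
      have := tendsto_const_nhds (x := (1/4:ℝ)) (f := atTop (α := ℕ)) |>.add tendsto_one_div_atTop_nhds_zero_nat
      simpa using this
    apply tendsto_of_tendsto_of_tendsto_of_le_of_le' tendsto_const_nhds hupper
    · filter_upwards [eventually_ge_atTop 1] with n hn
      have := uW_pos n
      have hn1 : (1:ℝ) ≤ (n:ℝ) := by exact_mod_cast hn
      have : (n:ℝ) + 1/4 < bW n / π := by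
        rw [lt_div_iff₀ hπ]; linarith [uW_pos n, mul_comm π ((n:ℝ) + 1/4)]
      linarith
    · filter_upwards [eventually_ge_atTop 1] with n hn
      have hn1 : (1:ℝ) ≤ (n:ℝ) := by exact_mod_cast hn
      have h1 := uW_le n hn
      have h2 : (2*(n:ℝ)+1)/(64*(n:ℝ)^2) ≤ 1/(n:ℝ) := by
        rw [div_le_div_iff₀ (by positivity) (by positivity)]
        nlinarith
      linarith
end

section
/- For every positive integer n and every real number s with 0 ≤ s ≤ 1, the double inequality n^{1-s} ≤ Γ(n+1)/Γ(n+s) ≤ exp((1-s)·ψ(n+1)) holds, where Γ denotes Euler's gamma function and ψ is the digamma function. -/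
open Real

/-- The digamma (psi) function, the derivative of `log ∘ Γ`. -/
noncomputable def digamma : ℝ → ℝ :=
  deriv fun x : ℝ => Real.log (Real.Gamma x)

theorem gautschi_first_double_inequality (n : ℕ) (hn : 0 < n) (s : ℝ)
    (hs0 : 0 ≤ s) (hs1 : s ≤ 1) :
    (n : ℝ) ^ (1 - s) ≤ Gamma (n + 1) / Gamma (n + s) ∧
      Gamma (n + 1) / Gamma (n + s) ≤ Real.exp ((1 - s) * digamma (n + 1)) := by
  have hn0 : (0 : ℝ) < n := by exact_mod_cast hn
  have hn1 : (1 : ℝ) ≤ n := by exact_mod_cast hn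
  have hns : (0 : ℝ) < n + s := by linarith
  have hns1 : (0 : ℝ) < n + 1 := by linarith
  have hGns : 0 < Gamma ((n : ℝ) + s) := Gamma_pos_of_pos hns
  have hGn1 : 0 < Gamma ((n : ℝ) + 1) := Gamma_pos_of_pos hns1
  have hGn : 0 < Gamma (n : ℝ) := Gamma_pos_of_pos hn0
  set f : ℝ → ℝ := log ∘ Gamma with hf
  have hconv := convexOn_log_Gamma
  have hdiv : Gamma ((n:ℝ) + 1) / Gamma ((n:ℝ) + s) = Real.exp (f (n+1) - f (n+s)) := by
    simp only [f, Function.comp_apply]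
    rw [Real.exp_sub, Real.exp_log hGn1, Real.exp_log hGns]
  have hrec : f ((n:ℝ) + 1) = Real.log n + f (n : ℝ) := by
    simp only [f, Function.comp]
    rw [Gamma_add_one hn0.ne', Real.log_mul hn0.ne' hGn.ne']
  constructor
  · -- left inequality via convexity: n + s = (1-s)•n + s•(n+1)
    have hcx := hconv.2 (Set.mem_Ioi.2 hn0) (Set.mem_Ioi.2 hns1)
      (by linarith : (0:ℝ) ≤ 1 - s) hs0 (by ring)
    have heq : (1 - s) • (n : ℝ) + s • ((n:ℝ) + 1) = (n : ℝ) + s := by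
      simp [smul_eq_mul]; ring
    rw [heq] at hcx
    have hkey : (1 - s) * Real.log n ≤ f ((n:ℝ)+1) - f ((n:ℝ)+s) := by
      have := hcx
      simp only [smul_eq_mul] at this
      nlinarith [hrec]
    rw [hdiv, Real.rpow_def_of_pos hn0]
    exact Real.exp_le_exp.2 (by linarith [mul_comm (1 - s) (Real.log n)])
  · -- right inequality via tangent line
    have hdiff : DifferentiableAt ℝ f ((n:ℝ) + 1) := by
      apply DifferentiableAt.log
      · refine Real.differentiableAt_Gamma fun m => ?_
        have h := Nat.cast_nonneg (α := ℝ) m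
        intro hc
        rw [hc] at hns1
        linarith
      · exact hGn1.ne'
    have hdig : digamma ((n:ℝ) + 1) = deriv f ((n:ℝ) + 1) := rfl
    rcases eq_or_lt_of_le hs1 with h1 | h1
    · subst h1
      rw [hdiv]
      simp
    · have hlt : (n : ℝ) + s < (n : ℝ) + 1 := by linarith
      have hsl := hconv.slope_le_deriv (Set.mem_Ioi.2 hns) (Set.mem_Ioi.2 hns1) hlt hdiff
      rw [slope_def_field] at hsl
      have h10 : (0:ℝ) < (n:ℝ) + 1 - ((n:ℝ) + s) := by linarith
      rw [div_le_iff₀ h10] at hsl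
      rw [hdiv, Real.exp_le_exp, hdig]
      calc f ((n:ℝ)+1) - f ((n:ℝ)+s)
          ≤ deriv f ((n:ℝ)+1) * ((n:ℝ) + 1 - ((n:ℝ) + s)) := hsl
        _ = (1 - s) * deriv f ((n:ℝ)+1) := by ring
end

section
/- For every real number p > 1 and every real number x ≥ 0, with c_p = (Γ(1 + 1/p))^{p/(p-1)}, the double inequality ((x^p + 2)^{1/p} - x)/2 < e^{x^p} ∫_x^∞ e^{-t^p} dt ≤ c_p · ((x^p + 1/c_p)^{1/p} - x) holds. -/
open Real Set MeasureTheory Filter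

namespace GautschiAux

noncomputable def psi (p a z : ℝ) : ℝ :=
  (a - 1) * z ^ (1 - p) - (a * p - 1) + (a * (p - 1) + 1) * z - z ^ p

noncomputable def psi' (p a z : ℝ) : ℝ :=
  (a - 1) * ((1 - p) * z ^ (-p)) + (a * (p - 1) + 1) - p * z ^ (p - 1)

lemma hasDerivAt_psi (p a : ℝ) {z : ℝ} (hz : 0 < z) :
    HasDerivAt (psi p a) (psi' p a z) z := by
  have h1 : HasDerivAt (fun z : ℝ => z ^ (1 - p)) ((1 - p) * z ^ (1 - p - 1)) z :=
    Real.hasDerivAt_rpow_const (Or.inl hz.ne')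
  have h2 : HasDerivAt (fun z : ℝ => z ^ p) (p * z ^ (p - 1)) z :=
    Real.hasDerivAt_rpow_const (Or.inl hz.ne')
  have h3 := (((h1.const_mul (a - 1)).sub_const (a * p - 1)).add
      ((hasDerivAt_id z).const_mul (a * (p - 1) + 1))).sub h2
  have he : (1 : ℝ) - p - 1 = -p := by ring
  rw [he] at h3
  refine h3.congr_deriv ?_
  · simp [psi']; try ring

lemma hasDerivAt_psi' (p a : ℝ) {z : ℝ} (hz : 0 < z) :
    HasDerivAt (psi' p a) (p * (p - 1) * z ^ (-p - 1) * ((a - 1) - z ^ (2 * p - 1))) z := by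
  have h1 : HasDerivAt (fun z : ℝ => z ^ (-p)) (-p * z ^ (-p - 1)) z :=
    Real.hasDerivAt_rpow_const (Or.inl hz.ne')
  have h2 : HasDerivAt (fun z : ℝ => z ^ (p - 1)) ((p - 1) * z ^ (p - 1 - 1)) z :=
    Real.hasDerivAt_rpow_const (Or.inl hz.ne')
  have h3 := (((h1.const_mul (1 - p)).const_mul (a - 1)).add_const (a * (p - 1) + 1)).sub
      (h2.const_mul p)
  refine h3.congr_deriv ?_
  have hz1 : z ^ (p - 1 - 1) = z ^ (-p - 1) * z ^ (2 * p - 1) := by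
    rw [← Real.rpow_add hz]; ring_nf
  rw [hz1]; ring

lemma psi_one (p a : ℝ) : psi p a 1 = 0 := by simp [psi]; ring

lemma psi'_one (p a : ℝ) : psi' p a 1 = 0 := by simp [psi']; ring

end GautschiAux

namespace GautschiAux2
open GautschiAux

variable {p a : ℝ}

lemma deriv_psi (hz : 0 < (z : ℝ)) : deriv (psi p a) z = psi' p a z :=
  (hasDerivAt_psi p a hz).deriv

lemma deriv_psi' (hz : 0 < (z : ℝ)) :
    deriv (psi' p a) z = p * (p - 1) * z ^ (-p - 1) * ((a - 1) - z ^ (2 * p - 1)) :=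
  (hasDerivAt_psi' p a hz).deriv

lemma psi'_nonneg (hp : 1 < p) {w : ℝ} (hw0 : 0 < w) (hw1 : w ≤ 1)
    (hcond : a - 1 ≤ w ^ (2 * p - 1)) : 0 ≤ psi' p a w := by
  have anti : AntitoneOn (psi' p a) (Icc w 1) := by
    apply antitoneOn_of_deriv_nonpos (convex_Icc _ _)
    · intro y hy
      exact (hasDerivAt_psi' p a (lt_of_lt_of_le hw0 hy.1)).continuousAt.continuousWithinAt
    · intro y hy
      rw [interior_Icc] at hy
      exact (hasDerivAt_psi' p a (hw0.trans hy.1)).differentiableAt.differentiableWithinAt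
    · intro y hy
      rw [interior_Icc] at hy
      have hy0 : 0 < y := hw0.trans hy.1
      rw [deriv_psi' hy0]
      have h1 : 0 < p * (p - 1) * y ^ (-p - 1) :=
          mul_pos (mul_pos (by linarith : (0:ℝ) < p) (by linarith : (0:ℝ) < p - 1))
            (Real.rpow_pos_of_pos hy0 _)
      have h2 : (a - 1) - y ^ (2 * p - 1) ≤ 0 := by
        have : w ^ (2 * p - 1) ≤ y ^ (2 * p - 1) :=
          Real.rpow_le_rpow hw0.le hy.1.le (by linarith)
        linarith
      exact mul_nonpos_of_nonneg_of_nonpos h1.le h2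
  have := anti (left_mem_Icc.mpr hw1) (right_mem_Icc.mpr hw1) hw1
  rwa [psi'_one] at this

lemma psi_nonpos (hp : 1 < p) {w : ℝ} (hw0 : 0 < w) (hw1 : w ≤ 1)
    (hcond : a - 1 ≤ w ^ (2 * p - 1)) : psi p a w ≤ 0 := by
  have mono : MonotoneOn (psi p a) (Icc w 1) := by
    apply monotoneOn_of_deriv_nonneg (convex_Icc _ _)
    · intro y hy
      exact (hasDerivAt_psi p a (lt_of_lt_of_le hw0 hy.1)).continuousAt.continuousWithinAt
    · intro y hy
      rw [interior_Icc] at hy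
      exact (hasDerivAt_psi p a (hw0.trans hy.1)).differentiableAt.differentiableWithinAt
    · intro y hy
      rw [interior_Icc] at hy
      have hy0 : 0 < y := hw0.trans hy.1
      rw [deriv_psi hy0]
      refine psi'_nonneg hp hy0 hy.2.le (hcond.trans ?_)
      exact Real.rpow_le_rpow hw0.le hy.1.le (by linarith)
  have := mono (left_mem_Icc.mpr hw1) (right_mem_Icc.mpr hw1) hw1
  rwa [psi_one] at this

lemma psi_cross (hp : 1 < p) {z z' : ℝ} (hz0 : 0 < z) (hzz : z < z') (hz1 : z' < 1)
    (hz : psi p a z ≤ 0) : psi p a z' ≤ 0 := by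
  rcases le_or_gt (a - 1) (z' ^ (2 * p - 1)) with hcase | hcase
  · exact psi_nonpos hp (hz0.trans hzz) hz1.le hcase
  · -- z'^(2p-1) < a - 1 ; convexity region
    have hq : (0:ℝ) < 2 * p - 1 := by linarith
    have ha1 : 0 < a - 1 := lt_of_le_of_lt (Real.rpow_nonneg (hz0.trans hzz).le _) hcase
    set z₁ : ℝ := min ((a - 1) ^ (1 / (2 * p - 1))) 1 with hz₁def
    have hz₁pos : 0 < z₁ := lt_min (Real.rpow_pos_of_pos ha1 _) one_pos
    have hz'lt : z' < z₁ := by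
      refine lt_min ?_ hz1
      have := Real.rpow_lt_rpow (Real.rpow_nonneg (hz0.trans hzz).le _) hcase
        (one_div_pos.mpr hq)
      rwa [← Real.rpow_mul (hz0.trans hzz).le, mul_one_div, div_self hq.ne', Real.rpow_one]
        at this
    have hz₁le1 : z₁ ≤ 1 := min_le_right _ _
    have hpsiz₁ : psi p a z₁ ≤ 0 := by
      rcases le_total ((a - 1) ^ (1 / (2 * p - 1))) 1 with h | h
      · have hzeq : z₁ = (a - 1) ^ (1 / (2 * p - 1)) := min_eq_left h
        refine psi_nonpos hp hz₁pos hz₁le1 ?_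
        rw [hzeq, ← Real.rpow_mul ha1.le, one_div_mul_cancel hq.ne', Real.rpow_one]
      · have h1 : z₁ = 1 := min_eq_right h
        rw [h1, psi_one]
    -- convexity of psi on Icc z z₁
    have hconv : ConvexOn ℝ (Icc z z₁) (psi p a) := by
      apply convexOn_of_deriv2_nonneg (convex_Icc _ _)
      · intro y hy
        exact (hasDerivAt_psi p a (hz0.trans_le hy.1)).continuousAt.continuousWithinAt
      · intro y hy
        rw [interior_Icc] at hy
        exact (hasDerivAt_psi p a (hz0.trans hy.1)).differentiableAt.differentiableWithinAt
      · intro y hy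
        rw [interior_Icc] at hy
        have hy0 : 0 < y := hz0.trans hy.1
        have hev : deriv (psi p a) =ᶠ[nhds y] psi' p a := by
          filter_upwards [eventually_gt_nhds hy0] with t ht
          exact deriv_psi ht
        exact (hev.differentiableAt_iff.mpr
          (hasDerivAt_psi' p a hy0).differentiableAt).differentiableWithinAt
      · intro y hy
        rw [interior_Icc] at hy
        have hy0 : 0 < y := hz0.trans hy.1
        have hder : deriv (deriv (psi p a)) y = deriv (psi' p a) y := by
          apply Filter.EventuallyEq.deriv_eq
          filter_upwards [eventually_gt_nhds hy0] with t ht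
          exact deriv_psi ht
        have : deriv^[2] (psi p a) y = deriv (psi' p a) y := by
          simpa [Function.iterate_succ, Function.comp] using hder
        rw [this, deriv_psi' hy0]
        have h1 : 0 < p * (p - 1) * y ^ (-p - 1) :=
          mul_pos (mul_pos (by linarith : (0:ℝ) < p) (by linarith : (0:ℝ) < p - 1))
            (Real.rpow_pos_of_pos hy0 _)
        have h2 : 0 ≤ (a - 1) - y ^ (2 * p - 1) := by
          have hyz₁ : y < z₁ := hy.2
          have : y ^ (2 * p - 1) < a - 1 := by
            have hle : y ^ (2 * p - 1) < z₁ ^ (2 * p - 1) :=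
              Real.rpow_lt_rpow hy0.le hyz₁ hq
            calc y ^ (2 * p - 1) < z₁ ^ (2 * p - 1) := hle
              _ ≤ ((a - 1) ^ (1 / (2 * p - 1))) ^ (2 * p - 1) :=
                  Real.rpow_le_rpow hz₁pos.le (min_le_left _ _) hq.le
              _ = a - 1 := by
                  rw [← Real.rpow_mul ha1.le, one_div_mul_cancel hq.ne', Real.rpow_one]
          linarith
        exact mul_nonneg h1.le h2
    have hseg : z' ∈ segment ℝ z z₁ := by
      rw [segment_eq_Icc (hzz.trans hz'lt).le]
      exact ⟨hzz.le, hz'lt.le⟩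
    have := hconv.le_on_segment (left_mem_Icc.mpr (hzz.trans hz'lt).le)
      (right_mem_Icc.mpr (hzz.trans hz'lt).le) hseg
    calc psi p a z' ≤ max (psi p a z) (psi p a z₁) := this
      _ ≤ 0 := max_le hz hpsiz₁

lemma psi_pos_two (hp : 1 < p) {z : ℝ} (hz0 : 0 < z) (hz1 : z < 1) : 0 < psi p 2 z := by
  have hpsi'neg : ∀ y : ℝ, 0 < y → y < 1 → psi' p 2 y < 0 := by
    intro y hy0 hy1
    have mono : StrictMonoOn (psi' p 2) (Icc y 1) := by
      apply strictMonoOn_of_deriv_pos (convex_Icc _ _)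
      · intro t ht
        exact (hasDerivAt_psi' p 2 (hy0.trans_le ht.1)).continuousAt.continuousWithinAt
      · intro t ht
        rw [interior_Icc] at ht
        have ht0 : 0 < t := hy0.trans ht.1
        rw [deriv_psi' ht0]
        have h2 : t ^ (2 * p - 1) < 1 := by
          have : t ^ (2 * p - 1) < 1 ^ (2 * p - 1) :=
            Real.rpow_lt_rpow ht0.le ht.2 (by linarith)
          rwa [Real.one_rpow] at this
        have h1 : 0 < p * (p - 1) * t ^ (-p - 1) :=
          mul_pos (mul_pos (by linarith : (0:ℝ) < p) (by linarith : (0:ℝ) < p - 1))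
            (Real.rpow_pos_of_pos ht0 _)
        have h3 : 0 < (2 - 1 : ℝ) - t ^ (2 * p - 1) := by linarith
        exact mul_pos h1 h3
    have := mono (left_mem_Icc.mpr hy1.le) (right_mem_Icc.mpr hy1.le) hy1
    rwa [psi'_one] at this
  have anti : StrictAntiOn (psi p 2) (Icc z 1) := by
    apply strictAntiOn_of_deriv_neg (convex_Icc _ _)
    · intro t ht
      exact (hasDerivAt_psi p 2 (hz0.trans_le ht.1)).continuousAt.continuousWithinAt
    · intro t ht
      rw [interior_Icc] at ht
      have ht0 : 0 < t := hz0.trans ht.1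
      rw [deriv_psi ht0]
      exact hpsi'neg t ht0 ht.2
  have := anti (left_mem_Icc.mpr hz1.le) (right_mem_Icc.mpr hz1.le) hz1
  rwa [psi_one] at this

end GautschiAux2

namespace GautschiAux3
open GautschiAux GautschiAux2

variable {p : ℝ}

noncomputable def F (p x : ℝ) : ℝ := ∫ t in Ioi x, Real.exp (-t ^ p)

lemma cont_f (hp : 1 < p) : Continuous fun t : ℝ => Real.exp (-t ^ p) :=
  Real.continuous_exp.comp (Real.continuous_rpow_const (by linarith)).neg

lemma intOn_f (hp : 1 < p) {x : ℝ} (hx : 0 ≤ x) :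
    IntegrableOn (fun t : ℝ => Real.exp (-t ^ p)) (Ioi x) := by
  have h0 : IntegrableOn (fun t : ℝ => Real.exp (-t ^ p)) (Ioi 0) := by
    have := integrableOn_rpow_mul_exp_neg_rpow (p := p) (s := 0) (by norm_num) (by linarith)
    simpa using this
  exact h0.mono_set (Ioi_subset_Ioi hx)

lemma F_zero (hp : 1 < p) : F p 0 = Real.Gamma (1 / p + 1) :=
  integral_exp_neg_rpow (by linarith)

lemma F_eq (hp : 1 < p) {x : ℝ} (hx : 0 ≤ x) :
    F p x = F p 0 - ∫ t in (0:ℝ)..x, Real.exp (-t ^ p) := by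
  have hunion : Ioc 0 x ∪ Ioi x = Ioi (0:ℝ) := Ioc_union_Ioi_eq_Ioi hx
  have hdisj : Disjoint (Ioc 0 x) (Ioi x) := Ioc_disjoint_Ioi le_rfl
  have hadd : F p 0 = (∫ t in Ioc 0 x, Real.exp (-t ^ p)) + F p x := by
    have h1 : IntegrableOn (fun t : ℝ => Real.exp (-t ^ p)) (Ioc 0 x) :=
      (intOn_f hp le_rfl).mono_set Ioc_subset_Ioi_self
    have := setIntegral_union hdisj measurableSet_Ioi h1 (intOn_f hp hx)
    rw [hunion] at this
    exact this
  rw [intervalIntegral.integral_of_le hx]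
  linarith [hadd]

lemma F_hasDerivAt (hp : 1 < p) {x : ℝ} (hx : 0 < x) :
    HasDerivAt (F p) (-Real.exp (-x ^ p)) x := by
  have hInt : ∀ y : ℝ, IntervalIntegrable (fun t : ℝ => Real.exp (-t ^ p)) volume 0 y :=
    fun y => (cont_f hp).intervalIntegrable 0 y
  have hprim : HasDerivAt (fun y => ∫ t in (0:ℝ)..y, Real.exp (-t ^ p))
      (Real.exp (-x ^ p)) x :=
    intervalIntegral.integral_hasDerivAt_right (hInt x)
      ((cont_f hp).stronglyMeasurableAtFilter _ _)
      (cont_f hp).continuousAt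
  have : HasDerivAt (fun y => F p 0 - ∫ t in (0:ℝ)..y, Real.exp (-t ^ p))
      (-Real.exp (-x ^ p)) x := (hprim.const_sub (F p 0))
  refine this.congr_of_eventuallyEq ?_
  filter_upwards [eventually_gt_nhds hx] with y hy
  exact F_eq hp hy.le

lemma F_continuousOn (hp : 1 < p) : ContinuousOn (F p) (Ici 0) := by
  have hc : Continuous fun y : ℝ => F p 0 - ∫ t in (0:ℝ)..y, Real.exp (-t ^ p) :=
    continuous_const.sub (intervalIntegral.continuous_primitive
      (fun a b => (cont_f hp).intervalIntegrable a b) 0)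
  intro y hy
  exact (hc.continuousAt.continuousWithinAt).congr
    (fun z hz => F_eq hp hz) (F_eq hp hy)

lemma F_nonneg (hp : 1 < p) {x : ℝ} (hx : 0 ≤ x) : 0 ≤ F p x :=
  setIntegral_nonneg measurableSet_Ioi fun t _ => (Real.exp_pos _).le

lemma F_tendsto (hp : 1 < p) : Tendsto (F p) atTop (nhds 0) := by
  have hb : ∀ x : ℝ, 1 ≤ x → F p x ≤ Real.exp (-x) := by
    intro x hx1
    have hx0 : (0:ℝ) ≤ x := by linarith
    have hmono : ∀ t ∈ Ioi x, Real.exp (-t ^ p) ≤ Real.exp (-t) := by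
      intro t ht
      have ht1 : (1:ℝ) ≤ t := by
        simp only [mem_Ioi] at ht; linarith
      have : t ^ (1:ℝ) ≤ t ^ p := Real.rpow_le_rpow_of_exponent_le ht1 hp.le
      rw [Real.rpow_one] at this
      exact Real.exp_le_exp.mpr (by linarith)
    calc F p x ≤ ∫ t in Ioi x, Real.exp (-t) := by
          apply setIntegral_mono_on (intOn_f hp hx0)
            (exp_neg_integrableOn_Ioi x one_pos |>.congr_fun (by
              intro t ht; simp) measurableSet_Ioi) measurableSet_Ioi
          intro t ht; exact hmono t ht
      _ = Real.exp (-x) := integral_exp_neg_Ioi x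
  have h1 : Tendsto (fun x : ℝ => Real.exp (-x)) atTop (nhds 0) :=
    Real.tendsto_exp_atBot.comp tendsto_neg_atTop_atBot
  refine tendsto_of_tendsto_of_tendsto_of_le_of_le' tendsto_const_nhds h1 ?_ ?_
  · filter_upwards [eventually_ge_atTop (1:ℝ)] with x hx
    exact F_nonneg hp (by linarith)
  · filter_upwards [eventually_ge_atTop (1:ℝ)] with x hx
    exact hb x hx

end GautschiAux3

namespace GautschiAux4
open GautschiAux GautschiAux2 GautschiAux3

variable {p a c : ℝ}

noncomputable def hfun (p c a x : ℝ) : ℝ :=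
  c * (Real.exp (-x ^ p) * ((x ^ p + a) ^ (1 / p) - x))

noncomputable def Dexpr (p a x : ℝ) : ℝ :=
  x ^ (p - 1) * (x ^ p + a) ^ (1 / p - 1) + (a - 1)
    - p * x ^ (p - 1) * ((x ^ p + a) ^ (1 / p) - x)

lemma hfun_hasDerivAt (hp : 1 < p) (ha : 0 < a) {x : ℝ} (hx : 0 < x) :
    HasDerivAt (hfun p c a)
      (c * (Real.exp (-x ^ p) *
        ((x ^ (p - 1) * (x ^ p + a) ^ (1 / p - 1) - 1)
          - p * x ^ (p - 1) * ((x ^ p + a) ^ (1 / p) - x)))) x := by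
  have hxp : HasDerivAt (fun x : ℝ => x ^ p) (p * x ^ (p - 1)) x :=
    Real.hasDerivAt_rpow_const (Or.inl hx.ne')
  have hua : 0 < x ^ p + a := by positivity
  have hE : HasDerivAt (fun x : ℝ => Real.exp (-x ^ p))
      (Real.exp (-x ^ p) * (-(p * x ^ (p - 1)))) x := by
    have := (Real.hasDerivAt_exp (-x ^ p)).comp x hxp.neg
    exact this
  have hw : HasDerivAt (fun x : ℝ => (x ^ p + a) ^ (1 / p))
      ((1 / p) * (x ^ p + a) ^ (1 / p - 1) * (p * x ^ (p - 1))) x := by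
    have hrw : HasDerivAt (fun u : ℝ => u ^ (1 / p))
        ((1 / p) * (x ^ p + a) ^ (1 / p - 1)) (x ^ p + a) :=
      Real.hasDerivAt_rpow_const (Or.inl hua.ne')
    exact (hrw.comp x (hxp.add_const a))
  have hg : HasDerivAt (fun x : ℝ => (x ^ p + a) ^ (1 / p) - x)
      ((1 / p) * (x ^ p + a) ^ (1 / p - 1) * (p * x ^ (p - 1)) - 1) x :=
    hw.sub (hasDerivAt_id x)
  have hmul := (hE.mul hg).const_mul c
  refine hmul.congr_deriv ?_
  have hpne : p ≠ 0 := by linarith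
  field_simp
  ring
lemma bridge (hp : 1 < p) (ha : 0 < a) {x : ℝ} (hx : 0 < x) :
    Dexpr p a x = ((x / (x ^ p + a) ^ (1 / p)) ^ (p - 1) * (x ^ p + a) / a)
      * psi p a (x / (x ^ p + a) ^ (1 / p)) := by
  have hpne : p ≠ 0 := by linarith
  have hu : 0 < x ^ p := Real.rpow_pos_of_pos hx p
  have hua : 0 < x ^ p + a := by positivity
  have hw : 0 < (x ^ p + a) ^ (1 / p) := Real.rpow_pos_of_pos hua _
  have hz : 0 < x / (x ^ p + a) ^ (1 / p) := div_pos hx hw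
  have hwp : ((x ^ p + a) ^ (1 / p)) ^ p = x ^ p + a := by
    rw [← Real.rpow_mul hua.le, one_div_mul_cancel hpne, Real.rpow_one]
  have hzp : (x / (x ^ p + a) ^ (1 / p)) ^ p = x ^ p / (x ^ p + a) := by
    rw [Real.div_rpow hx.le hw.le, hwp]
  have hxp1 : x ^ (p - 1) = x ^ p / x := by
    rw [Real.rpow_sub hx, Real.rpow_one]
  have hzp1 : (x / (x ^ p + a) ^ (1 / p)) ^ (p - 1)
      = (x ^ p / (x ^ p + a)) / (x / (x ^ p + a) ^ (1 / p)) := by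
    rw [Real.rpow_sub hz, Real.rpow_one, hzp]
  have hz1p : (x / (x ^ p + a) ^ (1 / p)) ^ (1 - p)
      = (x / (x ^ p + a) ^ (1 / p)) / (x ^ p / (x ^ p + a)) := by
    rw [Real.rpow_sub hz, Real.rpow_one, hzp]
  have hua1 : (x ^ p + a) ^ (1 / p - 1) = (x ^ p + a) ^ (1 / p) / (x ^ p + a) := by
    rw [Real.rpow_sub hua, Real.rpow_one]
  rw [Dexpr, psi, hxp1, hzp1, hz1p, hua1, hzp]
  field_simp
  ring

end GautschiAux4

namespace GautschiAux5
open GautschiAux GautschiAux2 GautschiAux3 GautschiAux4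

variable {p a c : ℝ}

lemma z_lt_one (hp : 1 < p) (ha : 0 < a) {x : ℝ} (hx : 0 < x) :
    x / (x ^ p + a) ^ (1 / p) < 1 := by
  have hu : 0 < x ^ p := Real.rpow_pos_of_pos hx p
  have hua : 0 < x ^ p + a := by positivity
  have hw : 0 < (x ^ p + a) ^ (1 / p) := Real.rpow_pos_of_pos hua _
  rw [div_lt_one hw]
  have : x ^ p < x ^ p + a := by linarith
  have h2 := Real.rpow_lt_rpow (Real.rpow_nonneg hx.le p) this
    (by positivity : (0:ℝ) < 1 / p)
  rwa [← Real.rpow_mul hx.le, mul_one_div, div_self (by linarith : p ≠ 0),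
    Real.rpow_one] at h2

lemma z_pos (hp : 1 < p) (ha : 0 < a) {x : ℝ} (hx : 0 < x) :
    0 < x / (x ^ p + a) ^ (1 / p) := by
  have hua : 0 < x ^ p + a := by
    have := Real.rpow_pos_of_pos hx p; positivity
  exact div_pos hx (Real.rpow_pos_of_pos hua _)

lemma z_eq (hp : 1 < p) (ha : 0 < a) {x : ℝ} (hx : 0 < x) :
    x / (x ^ p + a) ^ (1 / p) = (x ^ p / (x ^ p + a)) ^ (1 / p) := by
  have hu : 0 < x ^ p := Real.rpow_pos_of_pos hx p
  have hua : 0 < x ^ p + a := by positivity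
  rw [Real.div_rpow hu.le hua.le, ← Real.rpow_mul hx.le, mul_one_div,
    div_self (by linarith : p ≠ 0), Real.rpow_one]

lemma z_mono (hp : 1 < p) (ha : 0 < a) {x y : ℝ} (hx : 0 < x) (hxy : x < y) :
    x / (x ^ p + a) ^ (1 / p) < y / (y ^ p + a) ^ (1 / p) := by
  have hy : 0 < y := hx.trans hxy
  have hu : 0 < x ^ p := Real.rpow_pos_of_pos hx p
  have hv : 0 < y ^ p := Real.rpow_pos_of_pos hy p
  have huv : x ^ p < y ^ p := Real.rpow_lt_rpow hx.le hxy (by linarith)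
  rw [z_eq hp ha hx, z_eq hp ha hy]
  apply Real.rpow_lt_rpow (by positivity)
  · rw [div_lt_div_iff₀ (by positivity) (by positivity)]
    nlinarith
  · positivity

lemma Dexpr_pos_factor (hp : 1 < p) (ha : 0 < a) {x : ℝ} (hx : 0 < x) :
    0 < (x / (x ^ p + a) ^ (1 / p)) ^ (p - 1) * (x ^ p + a) / a := by
  have hu : 0 < x ^ p := Real.rpow_pos_of_pos hx p
  have hua : 0 < x ^ p + a := by positivity
  have hz := z_pos hp ha hx
  have := Real.rpow_pos_of_pos hz (p - 1)
  positivity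

noncomputable def G (p c a x : ℝ) : ℝ := hfun p c a x - F p x

lemma G_hasDerivAt (hp : 1 < p) (ha : 0 < a) (hca : c * a = 1) {x : ℝ} (hx : 0 < x) :
    HasDerivAt (G p c a) (Real.exp (-x ^ p) * (c * Dexpr p a x)) x := by
  have h1 := (hfun_hasDerivAt (c := c) hp ha hx).sub (F_hasDerivAt hp hx)
  refine h1.congr_deriv ?_
  rw [Dexpr]
  have : c * (x ^ (p - 1) * (x ^ p + a) ^ (1 / p - 1) + (a - 1)
      - p * x ^ (p - 1) * ((x ^ p + a) ^ (1 / p) - x))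
      = c * ((x ^ (p - 1) * (x ^ p + a) ^ (1 / p - 1) - 1)
      - p * x ^ (p - 1) * ((x ^ p + a) ^ (1 / p) - x)) + c * a := by ring
  rw [this, hca]
  ring

lemma hfun_continuous (hp : 1 < p) (ha : 0 < a) : Continuous (hfun p c a) := by
  have hxp : Continuous fun x : ℝ => x ^ p :=
    Real.continuous_rpow_const (by linarith)
  have hw : Continuous fun x : ℝ => (x ^ p + a) ^ (1 / p) :=
    (Real.continuous_rpow_const (by positivity)).comp (hxp.add continuous_const)
  exact continuous_const.mul (((Real.continuous_exp.comp hxp.neg)).mul (hw.sub continuous_id))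

lemma superadd (hp : 1 < p) (ha : 0 < a) {x : ℝ} (hx : 0 ≤ x) :
    (x ^ p + a) ^ (1 / p) ≤ x + a ^ (1 / p) := by
  have hb : (0:ℝ) ≤ a ^ (1 / p) := (Real.rpow_pos_of_pos ha _).le
  have key : x ^ p + a ≤ (x + a ^ (1 / p)) ^ p := by
    have hnn := NNReal.add_rpow_le_rpow_add x.toNNReal (a ^ (1 / p)).toNNReal hp.le
    have hle := NNReal.coe_le_coe.mpr hnn
    push_cast [NNReal.coe_rpow, Real.coe_toNNReal _ hx, Real.coe_toNNReal _ hb] at hle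
    have h3 : (a ^ (1 / p)) ^ p = a := by
      rw [← Real.rpow_mul ha.le, one_div_mul_cancel (by linarith : p ≠ 0), Real.rpow_one]
    rwa [h3] at hle
  have h4 := Real.rpow_le_rpow (by positivity) key (by positivity : (0:ℝ) ≤ 1 / p)
  rwa [← Real.rpow_mul (by positivity), mul_one_div, div_self (by linarith : p ≠ 0),
    Real.rpow_one] at h4

lemma g_nonneg (hp : 1 < p) (ha : 0 < a) {x : ℝ} (hx : 0 ≤ x) :
    0 ≤ (x ^ p + a) ^ (1 / p) - x := by
  have hu : 0 ≤ x ^ p := Real.rpow_nonneg hx p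
  have h1 : x ^ p ≤ x ^ p + a := by linarith
  have h2 := Real.rpow_le_rpow hu h1 (by positivity : (0:ℝ) ≤ 1 / p)
  rwa [← Real.rpow_mul hx, mul_one_div, div_self (by linarith : p ≠ 0), Real.rpow_one,
    ← sub_nonneg] at h2

lemma hfun_tendsto (hp : 1 < p) (ha : 0 < a) (hc : 0 < c) :
    Tendsto (hfun p c a) atTop (nhds 0) := by
  have hE : Tendsto (fun x : ℝ => Real.exp (-x ^ p)) atTop (nhds 0) :=
    Real.tendsto_exp_atBot.comp (tendsto_neg_atTop_atBot.comp
      (tendsto_rpow_atTop (by linarith)))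
  have hbound : Tendsto (fun x : ℝ => c * a ^ (1 / p) * Real.exp (-x ^ p)) atTop (nhds 0) := by
    simpa using hE.const_mul (c * a ^ (1 / p))
  refine tendsto_of_tendsto_of_tendsto_of_le_of_le' tendsto_const_nhds hbound ?_ ?_
  · filter_upwards [eventually_ge_atTop (0:ℝ)] with x hx
    have := g_nonneg hp ha (x := x) hx
    have hE0 : (0:ℝ) ≤ Real.exp (-x ^ p) := (Real.exp_pos _).le
    rw [hfun]
    positivity
  · filter_upwards [eventually_ge_atTop (0:ℝ)] with x hx
    rw [hfun]
    have h1 : (x ^ p + a) ^ (1 / p) - x ≤ a ^ (1 / p) := by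
      have := superadd hp ha (x := x) hx
      linarith
    have hE0 : (0:ℝ) < Real.exp (-x ^ p) := Real.exp_pos _
    calc c * (Real.exp (-x ^ p) * ((x ^ p + a) ^ (1 / p) - x))
        ≤ c * (Real.exp (-x ^ p) * a ^ (1 / p)) := by
          apply mul_le_mul_of_nonneg_left _ hc.le
          exact mul_le_mul_of_nonneg_left h1 hE0.le
      _ = c * a ^ (1 / p) * Real.exp (-x ^ p) := by ring

lemma hfun_zero (hp : 1 < p) : hfun p c a 0 = c * a ^ (1 / p) := by
  rw [hfun, Real.zero_rpow (by linarith : p ≠ 0)]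
  simp

lemma G_tendsto (hp : 1 < p) (ha : 0 < a) (hc : 0 < c) :
    Tendsto (G p c a) atTop (nhds 0) := by
  have := (hfun_tendsto hp ha hc).sub (F_tendsto hp)
  rw [sub_zero] at this; exact this

lemma G_continuousOn (hp : 1 < p) (ha : 0 < a) : ContinuousOn (G p c a) (Ici 0) :=
  (hfun_continuous hp ha).continuousOn.sub (F_continuousOn hp)

end GautschiAux5

namespace GautschiAux6
open GautschiAux GautschiAux2 GautschiAux3 GautschiAux4 GautschiAux5

variable {p a c : ℝ}

lemma upper_bound (hp : 1 < p) (hc : 0 < c) (ha : 0 < a) (hca : c * a = 1)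
    (hG0 : c * a ^ (1 / p) = Real.Gamma (1 / p + 1)) :
    ∀ x : ℝ, 0 ≤ x → F p x ≤ hfun p c a x := by
  have hGzero : G p c a 0 = 0 := by
    rw [G, hfun_zero hp, F_zero hp, hG0, sub_self]
  intro x hx
  rw [← sub_nonneg, ← G]
  rcases eq_or_lt_of_le hx with rfl | hx0
  · exact le_of_eq hGzero.symm
  rcases le_or_gt (psi p a (x / (x ^ p + a) ^ (1 / p))) 0 with hneg | hpos
  · -- G is antitone on [x, ∞), tends to 0
    have hanti : AntitoneOn (G p c a) (Ici x) := by
      apply antitoneOn_of_deriv_nonpos (convex_Ici x)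
      · exact (G_continuousOn hp ha).mono (Ici_subset_Ici.mpr hx)
      · intro y hy
        rw [interior_Ici] at hy
        exact (G_hasDerivAt hp ha hca (hx0.trans hy)).differentiableAt.differentiableWithinAt
      · intro y hy
        rw [interior_Ici] at hy
        have hy0 : 0 < y := hx0.trans hy
        rw [(G_hasDerivAt hp ha hca hy0).deriv]
        have hpsiy : psi p a (y / (y ^ p + a) ^ (1 / p)) ≤ 0 :=
          psi_cross hp (z_pos hp ha hx0) (z_mono hp ha hx0 hy) (z_lt_one hp ha hy0) hneg
        have hD : Dexpr p a y ≤ 0 := by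
          rw [bridge hp ha hy0]
          exact mul_nonpos_of_nonneg_of_nonpos (Dexpr_pos_factor hp ha hy0).le hpsiy
        exact mul_nonpos_of_nonneg_of_nonpos (Real.exp_pos _).le
          (mul_nonpos_of_nonneg_of_nonpos hc.le hD)
    refine le_of_tendsto (G_tendsto hp ha hc) ?_
    filter_upwards [eventually_ge_atTop x] with y hy
    exact hanti (self_mem_Ici) hy hy
  · -- G is monotone on [0, x]
    have hmono : MonotoneOn (G p c a) (Icc 0 x) := by
      apply monotoneOn_of_deriv_nonneg (convex_Icc 0 x)
      · exact (G_continuousOn hp ha).mono Icc_subset_Ici_self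
      · intro y hy
        rw [interior_Icc] at hy
        exact (G_hasDerivAt hp ha hca hy.1).differentiableAt.differentiableWithinAt
      · intro y hy
        rw [interior_Icc] at hy
        rw [(G_hasDerivAt hp ha hca hy.1).deriv]
        have hpsiy : 0 < psi p a (y / (y ^ p + a) ^ (1 / p)) := by
          by_contra hcon
          push_neg at hcon
          exact absurd (psi_cross hp (z_pos hp ha hy.1) (z_mono hp ha hy.1 hy.2)
            (z_lt_one hp ha hx0) hcon) (by linarith)
        have hD : 0 ≤ Dexpr p a y := by
          rw [bridge hp ha hy.1]
          exact (mul_pos (Dexpr_pos_factor hp ha hy.1) hpsiy).le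
        positivity
    have := hmono (left_mem_Icc.mpr hx) (right_mem_Icc.mpr hx) hx
    rwa [hGzero] at this

lemma lower_bound (hp : 1 < p) :
    ∀ x : ℝ, 0 ≤ x → hfun p (1/2) 2 x < F p x := by
  have hc : (0:ℝ) < 1/2 := by norm_num
  have ha : (0:ℝ) < 2 := by norm_num
  have hca : (1/2 : ℝ) * 2 = 1 := by norm_num
  have hmono : StrictMonoOn (G p (1/2) 2) (Ici 0) := by
    apply strictMonoOn_of_deriv_pos (convex_Ici 0)
    · exact G_continuousOn hp ha
    · intro y hy
      rw [interior_Ici] at hy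
      rw [(G_hasDerivAt hp ha hca hy).deriv]
      have hpsiy : 0 < psi p 2 (y / (y ^ p + 2) ^ (1 / p)) :=
        psi_pos_two hp (z_pos hp ha hy) (z_lt_one hp ha hy)
      have hD : 0 < Dexpr p 2 y := by
        rw [bridge hp ha hy]
        exact mul_pos (Dexpr_pos_factor hp ha hy) hpsiy
      positivity
  intro x hx
  rw [← sub_neg, ← G]
  have h1 : G p (1/2) 2 x < G p (1/2) 2 (x + 1) :=
    hmono hx (by simp only [mem_Ici]; linarith) (by linarith)
  have h2 : G p (1/2) 2 (x + 1) ≤ 0 := by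
    refine ge_of_tendsto (G_tendsto hp ha hc) ?_
    filter_upwards [eventually_ge_atTop (x + 1)] with y hy
    exact hmono.monotoneOn (by simp only [mem_Ici]; linarith) (by
      simp only [mem_Ici]; linarith) hy
  linarith

end GautschiAux6

theorem gautschi_incomplete_gamma_inequality (p x : ℝ) (hp : 1 < p) (hx : 0 ≤ x) :
    ((x ^ p + 2) ^ (1 / p) - x) / 2 < Real.exp (x ^ p) * ∫ t in Set.Ioi x, Real.exp (-t ^ p) ∧
      Real.exp (x ^ p) * ∫ t in Set.Ioi x, Real.exp (-t ^ p) ≤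
        Gamma (1 + 1 / p) ^ (p / (p - 1)) *
          ((x ^ p + 1 / Gamma (1 + 1 / p) ^ (p / (p - 1))) ^ (1 / p) - x) := by
  open GautschiAux3 GautschiAux4 GautschiAux6 in
  have hΓ : 0 < Real.Gamma (1 + 1 / p) :=
    Real.Gamma_pos_of_pos (by positivity)
  set c : ℝ := Real.Gamma (1 + 1 / p) ^ (p / (p - 1)) with hcdef
  have hc : 0 < c := Real.rpow_pos_of_pos hΓ _
  have ha : (0:ℝ) < 1 / c := by positivity
  have hca : c * (1 / c) = 1 := mul_one_div_cancel hc.ne'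
  have hpne : p ≠ 0 := by linarith
  have hEpos : (0:ℝ) < Real.exp (x ^ p) := Real.exp_pos _
  have hFdef : GautschiAux3.F p x = ∫ t in Set.Ioi x, Real.exp (-t ^ p) := rfl
  have key : c * (1 / c) ^ (1 / p) = Real.Gamma (1 / p + 1) := by
    rw [Real.div_rpow (by norm_num) hc.le, Real.one_rpow]
    rw [mul_one_div]
    have h2 : c ^ ((1:ℝ) - 1 / p) = c / c ^ (1 / p) := by
      rw [Real.rpow_sub hc, Real.rpow_one]
    rw [← h2, hcdef, ← Real.rpow_mul hΓ.le]
    have hp1 : p - 1 ≠ 0 := by linarith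
    have h3 : p / (p - 1) * (1 - 1 / p) = 1 := by
      field_simp
    rw [h3, Real.rpow_one, add_comm]
  constructor
  · have hl := GautschiAux6.lower_bound hp x hx
    rw [GautschiAux4.hfun] at hl
    have := mul_lt_mul_of_pos_left hl hEpos
    rw [hFdef] at this
    calc ((x ^ p + 2) ^ (1 / p) - x) / 2
        = Real.exp (x ^ p) * (1 / 2 * (Real.exp (-x ^ p) * ((x ^ p + 2) ^ (1 / p) - x))) := by
          rw [Real.exp_neg]; field_simp; try ring
      _ < _ := this
  · have hu := GautschiAux6.upper_bound hp hc ha hca key x hx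
    rw [GautschiAux4.hfun] at hu
    have := mul_le_mul_of_nonneg_left hu hEpos.le
    rw [hFdef] at this
    calc Real.exp (x ^ p) * ∫ t in Set.Ioi x, Real.exp (-t ^ p)
        ≤ Real.exp (x ^ p) * (c * (Real.exp (-x ^ p) * ((x ^ p + 1 / c) ^ (1 / p) - x))) := this
      _ = c * ((x ^ p + 1 / c) ^ (1 / p) - x) := by
          rw [Real.exp_neg]; field_simp; try ring
end

section
/- For every positive integer n, the double inequality 1/√(π(n + (n+1)/(4n+3))) < (2n-1)!!/(2n)!! < 1/√(π(n + 1/4)) holds. -/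
open Real

open Filter Topology Finset

noncomputable def chuC (n : ℕ) : ℝ := ((2*n).factorial : ℝ)^2 / ((2:ℝ)^n * n.factorial)^4

lemma chuC_pos (n : ℕ) : 0 < chuC n := by
  unfold chuC; positivity

lemma chuC_succ (n : ℕ) :
    chuC (n+1) = chuC n * ((2*(n:ℝ)+1)/(2*n+2))^2 := by
  unfold chuC
  have h1 : (2*(n+1)).factorial = (2*n+2) * ((2*n+1) * (2*n).factorial) := by
    rw [show 2*(n+1) = 2*n+1+1 by ring, Nat.factorial_succ, Nat.factorial_succ]
  have h2 : (n+1).factorial = (n+1) * n.factorial := Nat.factorial_succ n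
  rw [h1, h2]
  have hf : (0:ℝ) < (n.factorial : ℝ) := by positivity
  have h2n : (0:ℝ) < ((2*n).factorial : ℝ) := by positivity
  push_cast
  field_simp
  ring

lemma chuC_mul_tendsto :
    Tendsto (fun n : ℕ => chuC n * (2*(n:ℝ)+1)) atTop (𝓝 (2/π)) := by
  have h : ∀ n : ℕ, chuC n * (2*(n:ℝ)+1) = (Real.Wallis.W n)⁻¹ := by
    intro n
    rw [Real.Wallis.W_eq_factorial_ratio]
    unfold chuC
    have hf : (0:ℝ) < (n.factorial : ℝ) := by positivity
    have h2n : (0:ℝ) < ((2*n).factorial : ℝ) := by positivity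
    rw [mul_pow, ← pow_mul]
    push_cast
    field_simp
    ring
  simp_rw [h]
  have := Real.Wallis.tendsto_W_nhds_pi_div_two.inv₀ (by positivity : (π/2 : ℝ) ≠ 0)
  convert this using 2
  rw [inv_div]

lemma ratio_g_tendsto : Tendsto (fun n : ℕ => ((n:ℝ)+1/4)/(2*n+1)) atTop (𝓝 (1/2)) := by
  have hat : Tendsto (fun n : ℕ => (2*(n:ℝ)+1)) atTop atTop := by
    apply tendsto_atTop_add_const_right
    exact (tendsto_natCast_atTop_atTop (R := ℝ)).const_mul_atTop two_pos
  have hinv : Tendsto (fun n : ℕ => (2*(n:ℝ)+1)⁻¹) atTop (𝓝 0) :=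
    tendsto_inv_atTop_zero.comp hat
  have heq : ∀ n : ℕ, ((n:ℝ)+1/4)/(2*n+1) = 1/2 - (1/4) * (2*(n:ℝ)+1)⁻¹ := by
    intro n
    have h : (2*(n:ℝ)+1) ≠ 0 := by positivity
    field_simp
    ring
  simp_rw [heq]
  have := (tendsto_const_nhds (x := (1/2:ℝ)) (f := atTop (α := ℕ))).sub
    ((tendsto_const_nhds (x := (1/4:ℝ))).mul hinv)
  simpa using this

lemma ratio_f_tendsto : Tendsto (fun n : ℕ => (2*(n:ℝ)+1)/(4*n+3)) atTop (𝓝 (1/2)) := by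
  have hat : Tendsto (fun n : ℕ => (4*(n:ℝ)+3)) atTop atTop := by
    apply tendsto_atTop_add_const_right
    exact (tendsto_natCast_atTop_atTop (R := ℝ)).const_mul_atTop four_pos
  have hinv : Tendsto (fun n : ℕ => (4*(n:ℝ)+3)⁻¹) atTop (𝓝 0) :=
    tendsto_inv_atTop_zero.comp hat
  have heq : ∀ n : ℕ, (2*(n:ℝ)+1)/(4*n+3) = 1/2 - (1/2) * (4*(n:ℝ)+3)⁻¹ := by
    intro n
    have h : (4*(n:ℝ)+3) ≠ 0 := by positivity
    field_simp
    ring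
  simp_rw [heq]
  have := (tendsto_const_nhds (x := (1/2:ℝ)) (f := atTop (α := ℕ))).sub
    ((tendsto_const_nhds (x := (1/2:ℝ))).mul hinv)
  simpa using this

lemma g_tendsto : Tendsto (fun n : ℕ => chuC n * ((n:ℝ)+1/4)) atTop (𝓝 (1/π)) := by
  have heq : ∀ n : ℕ, chuC n * ((n:ℝ)+1/4)
      = (chuC n * (2*(n:ℝ)+1)) * (((n:ℝ)+1/4)/(2*n+1)) := by
    intro n
    have h : (2*(n:ℝ)+1) ≠ 0 := by positivity
    field_simp
  simp_rw [heq]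
  have := chuC_mul_tendsto.mul ratio_g_tendsto
  convert this using 2
  field_simp

lemma f_tendsto : Tendsto (fun n : ℕ => chuC n * ((2*(n:ℝ)+1)^2/(4*n+3))) atTop (𝓝 (1/π)) := by
  have heq : ∀ n : ℕ, chuC n * ((2*(n:ℝ)+1)^2/(4*n+3))
      = (chuC n * (2*(n:ℝ)+1)) * ((2*(n:ℝ)+1)/(4*n+3)) := by
    intro n
    have h : (4*(n:ℝ)+3) ≠ 0 := by positivity
    field_simp
  simp_rw [heq]
  have := chuC_mul_tendsto.mul ratio_f_tendsto
  convert this using 2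
  field_simp

lemma g_step (n : ℕ) : chuC n * ((n:ℝ)+1/4) < chuC (n+1) * (((n:ℕ):ℝ)+1+1/4) := by
  rw [chuC_succ]
  set x : ℝ := (n:ℝ) with hx
  have hx0 : 0 ≤ x := Nat.cast_nonneg n
  have h1 : (0:ℝ) < 2*x+2 := by positivity
  rw [mul_assoc]
  apply mul_lt_mul_of_pos_left _ (chuC_pos n)
  rw [div_pow, div_mul_eq_mul_div, lt_div_iff₀ (by positivity)]
  nlinarith [sq_nonneg (2*x+1)]

lemma f_step (n : ℕ) :
    chuC (n+1) * ((2*((n:ℝ)+1)+1)^2/(4*((n:ℝ)+1)+3)) < chuC n * ((2*(n:ℝ)+1)^2/(4*n+3)) := by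
  rw [chuC_succ]
  set x : ℝ := (n:ℝ) with hx
  have hx0 : 0 ≤ x := Nat.cast_nonneg n
  rw [mul_assoc]
  apply mul_lt_mul_of_pos_left _ (chuC_pos n)
  rw [div_pow, div_mul_div_comm, div_lt_div_iff₀ (by positivity) (by positivity)]
  nlinarith [sq_nonneg (2*x+1), sq_nonneg ((2*x+1)*(2*x+3))]

lemma g_lt (n : ℕ) : chuC n * ((n:ℝ)+1/4) < 1/π := by
  have hmono : Monotone (fun n : ℕ => chuC n * ((n:ℝ)+1/4)) := by
    apply monotone_nat_of_le_succ
    intro m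
    have := g_step m
    push_cast
    push_cast at this
    linarith
  calc chuC n * ((n:ℝ)+1/4) < chuC (n+1) * (((n:ℕ):ℝ)+1+1/4) := g_step n
    _ = chuC (n+1) * (((n+1:ℕ):ℝ)+1/4) := by push_cast; ring_nf
    _ ≤ 1/π := hmono.ge_of_tendsto g_tendsto (n+1)

lemma f_gt (n : ℕ) : 1/π < chuC n * ((2*(n:ℝ)+1)^2/(4*n+3)) := by
  have hanti : Antitone (fun n : ℕ => chuC n * ((2*(n:ℝ)+1)^2/(4*n+3))) := by
    apply antitone_nat_of_succ_le
    intro m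
    have := f_step m
    push_cast
    push_cast at this
    linarith
  calc 1/π ≤ chuC (n+1) * ((2*((n+1:ℕ):ℝ)+1)^2/(4*((n+1:ℕ):ℝ)+3)) :=
        hanti.le_of_tendsto f_tendsto (n+1)
    _ = chuC (n+1) * ((2*((n:ℝ)+1)+1)^2/(4*((n:ℝ)+1)+3)) := by push_cast; ring_nf
    _ < chuC n * ((2*(n:ℝ)+1)^2/(4*n+3)) := f_step n

/-- For a positive integer `n`, with `(2n)!! = 2^n · n!` and `(2n-1)!! = (2n)!/(2^n · n!)`,
Chu's refinement of Wallis' inequality: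
`1/√(π(n+(n+1)/(4n+3))) < (2n-1)!!/(2n)!! < 1/√(π(n+1/4))`. -/
theorem chu_wallis_inequality (n : ℕ) (hn : 0 < n) :
    1 / Real.sqrt (π * (n + (n + 1) / (4 * n + 3) : ℝ)) <
        (((2 * n).factorial : ℝ) / ((2 : ℝ) ^ n * n.factorial)) / ((2 : ℝ) ^ n * n.factorial) ∧
      (((2 * n).factorial : ℝ) / ((2 : ℝ) ^ n * n.factorial)) / ((2 : ℝ) ^ n * n.factorial) <
        1 / Real.sqrt (π * (n + 1 / 4)) := by
  have hx0 : (0:ℝ) ≤ (n:ℝ) := Nat.cast_nonneg n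
  have hden : (0:ℝ) < (2:ℝ)^n * n.factorial := by positivity
  have hCsq : chuC n = ((((2 * n).factorial : ℝ) / ((2 : ℝ) ^ n * n.factorial)) / ((2 : ℝ) ^ n * n.factorial))^2 := by
    unfold chuC; field_simp
  have hF : (((2 * n).factorial : ℝ) / ((2 : ℝ) ^ n * n.factorial)) / ((2 : ℝ) ^ n * n.factorial)
      = Real.sqrt (chuC n) := by
    rw [hCsq, Real.sqrt_sq (by positivity)]
  have hX : (0:ℝ) < (2*(n:ℝ)+1)^2/(4*n+3) := by positivity
  have hrw : ((n:ℝ) + ((n:ℝ) + 1) / (4 * (n:ℝ) + 3)) = (2*(n:ℝ)+1)^2/(4*(n:ℝ)+3) := by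
    have h : (4*(n:ℝ)+3) ≠ 0 := by positivity
    field_simp
    ring
  constructor
  · rw [hF, hrw, one_div, ← Real.sqrt_inv]
    apply Real.sqrt_lt_sqrt (by positivity)
    have h1 := f_gt n
    rw [div_lt_iff₀ pi_pos] at h1
    calc (π * ((2*(n:ℝ)+1)^2/(4*↑n+3)))⁻¹
        < (π * ((2*(n:ℝ)+1)^2/(4*↑n+3)))⁻¹ * (chuC n * ((2*(n:ℝ)+1)^2/(4*↑n+3)) * π) := by
          nlinarith [inv_pos.mpr (mul_pos pi_pos hX)]
      _ = chuC n := by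
          field_simp
  · rw [hF, one_div (Real.sqrt _), ← Real.sqrt_inv]
    apply Real.sqrt_lt_sqrt (le_of_lt (chuC_pos n))
    have h1 := g_lt n
    have hY : (0:ℝ) < (n:ℝ) + 1/4 := by positivity
    rw [lt_div_iff₀ pi_pos] at h1
    rw [lt_inv_comm₀ (chuC_pos n) (by positivity)]
    calc π * ((n:ℝ) + 1/4) = (chuC n)⁻¹ * (chuC n * ((n:ℝ)+1/4) * π) := by
          rw [show chuC n * ((n:ℝ)+1/4) * π = chuC n * (((n:ℝ)+1/4) * π) by ring,
            ← mul_assoc, inv_mul_cancel₀ (chuC_pos n).ne', one_mul]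
          ring
      _ < (chuC n)⁻¹ * 1 := by
          exact mul_lt_mul_of_pos_left h1 (inv_pos.mpr (chuC_pos n))
      _ = (chuC n)⁻¹ := mul_one _
end
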